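/- arXiv:2408.02264 — 5 statements merged into one kernel-verified Lean document; each statement's English description precedes it below -/
import Mathlib

section
/- For every real x ≥ 1 and every f : ℝ⁺ → ℝ⁺, the number of positive integers n ≤ x that have a prime factor p > f(x) together with a divisor d > 1 satisfying d ≡ 1 (mod p) is less than x(log x + 1) / f(x). -/
open Finset

lemma tele_eq (a : ℕ) : ∀ b, a ≤ b →
    ∑ j ∈ Finset.Ico a b, ((1:ℝ)/j - 1/(j+1)) = 1/a - 1/b := by
  intro b hb
  induction b, hb using Nat.le_induction with
  | base => simp
  | succ n hn ih =>
      rw [Finset.sum_Ico_succ_top hn, ih]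
      push_cast
      ring

lemma tele (J : Finset ℕ) (j₀ : ℕ) (h0 : 0 < j₀) (hJ : ∀ j ∈ J, j₀ ≤ j) :
    ∑ j ∈ J, ((1:ℝ)/j - 1/(j+1)) ≤ 1/j₀ := by
  classical
  set N := J.sup id with hN
  have hsub : J ⊆ Finset.Ico j₀ (N+1) := by
    intro j hj
    exact Finset.mem_Ico.mpr ⟨hJ j hj, Nat.lt_succ_of_le (Finset.le_sup (f := id) hj)⟩
  have h1 : ∑ j ∈ J, ((1:ℝ)/j - 1/(j+1)) ≤ ∑ j ∈ Finset.Ico j₀ (N+1), ((1:ℝ)/j - 1/(j+1)) := by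
    apply Finset.sum_le_sum_of_subset_of_nonneg hsub
    intro j hj _
    have hj1 : (1:ℝ) ≤ j := by
      have := (Finset.mem_Ico.mp hj).1
      exact_mod_cast le_trans h0 this
    have : (0:ℝ) < j := by linarith
    have h2 : (0:ℝ) < j + 1 := by linarith
    rw [sub_nonneg]
    apply one_div_le_one_div_of_le this
    linarith
  rcases le_or_gt j₀ (N+1) with h | h
  · rw [tele_eq j₀ (N+1) h] at h1
    have : (0:ℝ) ≤ 1/((N:ℝ)+1) := by positivity
    have hcast : ((N+1 : ℕ):ℝ) = (N:ℝ)+1 := by push_cast; ring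
    rw [hcast] at h1
    linarith
  · have hemp : Finset.Ico j₀ (N+1) = ∅ := Finset.Ico_eq_empty (by omega)
    rw [hemp, Finset.sum_empty] at h1
    have : (0:ℝ) ≤ 1/(j₀:ℝ) := by positivity
    linarith

lemma oddsum (P : Finset ℕ) (j₀ : ℕ) (h0 : 0 < j₀)
    (hP : ∀ p ∈ P, Odd p ∧ 2*j₀+1 ≤ p) :
    ∑ p ∈ P, (1:ℝ)/(p^2) ≤ 1/(4*(j₀:ℝ)) := by
  classical
  have hinj : ∀ a ∈ P, ∀ b ∈ P, a/2 = b/2 → a = b := by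
    intro a ha b hb hab
    obtain ⟨⟨ka, hka⟩, _⟩ := hP a ha
    obtain ⟨⟨kb, hkb⟩, _⟩ := hP b hb
    omega
  have step1 : ∑ p ∈ P, (1:ℝ)/(p^2)
      ≤ ∑ p ∈ P, (1/4) * ((1:ℝ)/(p/2 : ℕ) - 1/((p/2 : ℕ)+1)) := by
    apply Finset.sum_le_sum
    intro p hp
    obtain ⟨⟨k, hk⟩, hge⟩ := hP p hp
    have hp2 : p/2 = k := by omega
    rw [hp2]
    have hk1 : 1 ≤ k := by omega
    have hkR : (1:ℝ) ≤ (k:ℝ) := by exact_mod_cast hk1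
    have hpk : (p:ℝ) = 2*(k:ℝ)+1 := by
      have : p = 2*k+1 := by omega
      exact_mod_cast this
    rw [hpk]
    have h1 : (1:ℝ)/(k:ℝ) - 1/((k:ℝ)+1) = 1/((k:ℝ)*((k:ℝ)+1)) := by
      field_simp
      ring
    rw [h1]
    have h2 : (1/4:ℝ) * (1/((k:ℝ)*((k:ℝ)+1))) = 1/(4*((k:ℝ)*((k:ℝ)+1))) := by
      rw [div_mul_div_comm, one_mul]
    rw [h2]
    apply one_div_le_one_div_of_le (by positivity) (by nlinarith)
  have step2 : ∑ p ∈ P, ((1:ℝ)/(p/2 : ℕ) - 1/((p/2 : ℕ)+1)) ≤ 1/(j₀:ℝ) := by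
    have himg := tele (P.image (fun p => p/2)) j₀ h0 (by
      intro j hj
      obtain ⟨p, hp, rfl⟩ := Finset.mem_image.mp hj
      have := (hP p hp).2
      omega)
    rwa [Finset.sum_image hinj] at himg
  calc ∑ p ∈ P, (1:ℝ)/(p^2)
      ≤ ∑ p ∈ P, (1/4) * ((1:ℝ)/(p/2 : ℕ) - 1/((p/2 : ℕ)+1)) := step1
    _ = (1/4) * ∑ p ∈ P, ((1:ℝ)/(p/2 : ℕ) - 1/((p/2 : ℕ)+1)) := by
        rw [Finset.mul_sum]
    _ ≤ (1/4) * (1/(j₀:ℝ)) := by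
        apply mul_le_mul_of_nonneg_left step2 (by norm_num)
    _ = 1/(4*(j₀:ℝ)) := by
        rw [div_mul_div_comm]
        norm_num

lemma key (F : ℝ) (hF : 0 < F) (P : Finset ℕ) (hP : ∀ p ∈ P, p.Prime ∧ F < p) :
    ∑ p ∈ P, (1:ℝ)/(p^2) < 1/F := by
  classical
  rcases le_or_gt F 2 with h2 | h2
  · have hsplit := (Finset.sum_filter_add_sum_filter_not P (fun p => p < 5)
      (fun p => (1:ℝ)/(p^2))).symm
    have hsmall : ∑ p ∈ P.filter (fun p => p < 5), (1:ℝ)/(p^2) ≤ 1/4 + 1/9 := by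
      have hss : P.filter (fun p => p < 5) ⊆ ({2, 3} : Finset ℕ) := by
        intro p hp
        rw [Finset.mem_filter] at hp
        have hpr := (hP p hp.1).1
        have h5 := hp.2
        interval_cases p <;> simp_all (config := {decide := true})
      calc ∑ p ∈ P.filter (fun p => p < 5), (1:ℝ)/(p^2)
          ≤ ∑ p ∈ ({2, 3} : Finset ℕ), (1:ℝ)/(p^2) := by
            apply Finset.sum_le_sum_of_subset_of_nonneg hss
            intro p _ _
            positivity
        _ = 1/4 + 1/9 := by norm_num
    have hbig : ∑ p ∈ P.filter (fun p => ¬ p < 5), (1:ℝ)/(p^2) ≤ 1/(4*((2:ℕ):ℝ)) := by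
      apply oddsum _ 2 (by norm_num)
      intro p hp
      rw [Finset.mem_filter] at hp
      have hpr := (hP p hp.1).1
      have h5 : 5 ≤ p := by omega
      exact ⟨hpr.odd_of_ne_two (by omega), h5⟩
    have hhalf : (1:ℝ)/2 ≤ 1/F := by
      apply one_div_le_one_div_of_le hF h2
    have : ∑ p ∈ P, (1:ℝ)/(p^2) ≤ 1/4 + 1/9 + 1/8 := by
      rw [hsplit]
      have : (1:ℝ)/(4*((2:ℕ):ℝ)) = 1/8 := by norm_num
      rw [this] at hbig
      linarith
    have h3572 : (1:ℝ)/4 + 1/9 + 1/8 < 1/2 := by norm_num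
    linarith
  · set j₀ := ⌊(F-1)/2⌋₊ + 1 with hj₀
    have hj0 : 0 < j₀ := Nat.succ_pos _
    have hfl : ((F-1)/2 : ℝ) < (j₀ : ℝ) := by
      rw [hj₀]
      push_cast
      exact Nat.lt_floor_add_one _
    have hcond : ∀ p ∈ P, Odd p ∧ 2*j₀+1 ≤ p := by
      intro p hp
      obtain ⟨hpr, hgt⟩ := hP p hp
      have hne2 : p ≠ 2 := by
        rintro rfl
        push_cast at hgt
        linarith
      have hodd : Odd p := hpr.odd_of_ne_two hne2
      obtain ⟨m, hm⟩ := hodd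
      refine ⟨⟨m, hm⟩, ?_⟩
      have hmR : ((F-1)/2 : ℝ) < (m:ℝ) := by
        have hpm : (p:ℝ) = 2*(m:ℝ)+1 := by exact_mod_cast hm
        linarith
      have hfloor : (⌊(F-1)/2⌋₊ : ℝ) ≤ (F-1)/2 := Nat.floor_le (by linarith)
      have : ⌊(F-1)/2⌋₊ < m := by exact_mod_cast lt_of_le_of_lt hfloor hmR
      omega
    have hsum := oddsum P j₀ hj0 hcond
    refine lt_of_le_of_lt hsum ?_
    apply one_div_lt_one_div_of_lt hF
    have hj0R : (1:ℝ) ≤ (j₀:ℝ) := by exact_mod_cast hj0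
    nlinarith

theorem stmt2 (f : ℝ → ℝ) (hf : ∀ x > 0, f x > 0) (x : ℝ) (hx : 1 ≤ x) :
    ({n : ℕ | 0 < n ∧ (n : ℝ) ≤ x ∧ ∃ p : ℕ, p.Prime ∧ (p : ℝ) > f x ∧ p ∣ n ∧
        ∃ d : ℕ, d ∣ n ∧ 1 < d ∧ d % p = 1 % p}.ncard : ℝ)
      < x * (Real.log x + 1) / f x := by
  classical
  have hx0 : (0:ℝ) < x := by linarith
  have hF : 0 < f x := hf x hx0
  set F := f x with hFdef
  set X := ⌊x⌋₊ with hXdef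
  have hX1 : 1 ≤ X := Nat.le_floor (by exact_mod_cast hx)
  have hXx : (X:ℝ) ≤ x := Nat.floor_le hx0.le
  set Pf := (Finset.Icc 2 X).filter (fun p : ℕ => p.Prime ∧ F < (p:ℝ)) with hPfdef
  set Kf := Finset.Icc 1 X with hKfdef
  set B := (Pf ×ˢ Kf).biUnion
      (fun t => (Finset.Ioc 0 X).filter (fun n => t.1*(t.2*t.1+1) ∣ n)) with hBdef
  have hsub : {n : ℕ | 0 < n ∧ (n : ℝ) ≤ x ∧ ∃ p : ℕ, p.Prime ∧ (p : ℝ) > F ∧ p ∣ n ∧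
      ∃ d : ℕ, d ∣ n ∧ 1 < d ∧ d % p = 1 % p} ⊆ ↑B := by
    rintro n ⟨hn0, hnx, p, hp, hpF, hpn, d, hdn, hd1, hdp⟩
    have hnX : n ≤ X := Nat.le_floor hnx
    have hp2 : 2 ≤ p := hp.two_le
    have h1p : 1 % p = 1 := Nat.mod_eq_of_lt (by omega)
    rw [h1p] at hdp
    obtain ⟨k, hdk⟩ : ∃ k, k * p + 1 = d :=
      ⟨d / p, by rw [mul_comm, ← hdp]; exact Nat.div_add_mod d p⟩
    have hk1 : 1 ≤ k := by
      rcases Nat.eq_zero_or_pos k with rfl | h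
      · simp at hdk; omega
      · exact h
    have hkd : k ≤ d := by
      calc k ≤ k * p := Nat.le_mul_of_pos_right k (by omega)
        _ ≤ d := by omega
    have hpd : ¬ p ∣ d := by
      intro h
      obtain ⟨c, hc⟩ := h
      have hmod : d % p = 0 := by rw [hc]; exact Nat.mul_mod_right p c
      omega
    have hcop : Nat.Coprime p d := (Nat.Prime.coprime_iff_not_dvd hp).mpr hpd
    have hmdvd : p * (k*p+1) ∣ n := by
      rw [hdk]
      exact hcop.mul_dvd_of_dvd_of_dvd hpn hdn
    refine Finset.mem_coe.mpr (Finset.mem_biUnion.mpr ⟨(p, k), ?_, ?_⟩)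
    · refine Finset.mem_product.mpr ⟨Finset.mem_filter.mpr ⟨?_, hp, hpF⟩, ?_⟩
      · exact Finset.mem_Icc.mpr ⟨hp2, le_trans (Nat.le_of_dvd hn0 hpn) hnX⟩
      · exact Finset.mem_Icc.mpr ⟨hk1,
          le_trans (le_trans hkd (Nat.le_of_dvd hn0 hdn)) hnX⟩
    · exact Finset.mem_filter.mpr ⟨Finset.mem_Ioc.mpr ⟨hn0, hnX⟩, hmdvd⟩
  have hcard : ({n : ℕ | 0 < n ∧ (n : ℝ) ≤ x ∧ ∃ p : ℕ, p.Prime ∧ (p : ℝ) > F ∧ p ∣ n ∧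
      ∃ d : ℕ, d ∣ n ∧ 1 < d ∧ d % p = 1 % p}).ncard ≤ B.card := by
    have h := Set.ncard_le_ncard hsub B.finite_toSet
    simpa using h
  have hcard2 : B.card ≤ ∑ t ∈ Pf ×ˢ Kf, X / (t.1 * (t.2*t.1+1)) := by
    refine le_trans Finset.card_biUnion_le ?_
    apply Finset.sum_le_sum
    intro t ht
    rw [Nat.Ioc_filter_dvd_card_eq_div]
  have hterm : ∀ t ∈ Pf ×ˢ Kf,
      ((X / (t.1 * (t.2*t.1+1)) : ℕ) : ℝ) ≤ x * ((1:ℝ)/((t.1:ℝ)^2) * (1/(t.2:ℝ))) := by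
    rintro ⟨p, k⟩ ht
    rw [Finset.mem_product] at ht
    obtain ⟨hpmem, hkmem⟩ := ht
    rw [Finset.mem_filter, Finset.mem_Icc] at hpmem
    rw [Finset.mem_Icc] at hkmem
    have hp2 : (2:ℝ) ≤ (p:ℝ) := by exact_mod_cast hpmem.1.1
    have hk1 : (1:ℝ) ≤ (k:ℝ) := by exact_mod_cast hkmem.1
    have hm : ((p * (k*p+1) : ℕ) : ℝ) = (p:ℝ) * ((k:ℝ)*(p:ℝ)+1) := by push_cast; ring
    calc ((X / (p * (k*p+1)) : ℕ) : ℝ)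
        ≤ ((X:ℕ):ℝ) / ((p * (k*p+1) : ℕ) : ℝ) := Nat.cast_div_le
      _ ≤ x / ((k:ℝ) * (p:ℝ)^2) := by
          rw [hm]
          apply div_le_div₀ hx0.le hXx (by nlinarith) (by nlinarith)
      _ = x * ((1:ℝ)/((p:ℝ)^2) * (1/(k:ℝ))) := by
          have h : (1:ℝ)/((p:ℝ)^2) * (1/(k:ℝ)) = 1/((k:ℝ)*(p:ℝ)^2) := by
            rw [div_mul_div_comm, one_mul, mul_comm]
          rw [h, mul_one_div]
  have hK : ∑ k ∈ Kf, (1:ℝ)/(k:ℝ) ≤ Real.log x + 1 := by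
    have h1 : ((harmonic X : ℚ) : ℝ) = ∑ k ∈ Kf, (1:ℝ)/(k:ℝ) := by
      rw [harmonic_eq_sum_Icc]
      push_cast
      simp [hKfdef, one_div]
    rw [← h1]
    have h2 := harmonic_le_one_add_log X
    have hXpos : (0:ℝ) < (X:ℝ) := by exact_mod_cast hX1
    have h3 : Real.log (X:ℝ) ≤ Real.log x := Real.log_le_log hXpos hXx
    linarith
  have hKpos : 0 < ∑ k ∈ Kf, (1:ℝ)/(k:ℝ) := by
    apply Finset.sum_pos
    · intro k hk
      rw [hKfdef, Finset.mem_Icc] at hk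
      have : (1:ℝ) ≤ (k:ℝ) := by exact_mod_cast hk.1
      positivity
    · exact ⟨1, by rw [hKfdef]; exact Finset.mem_Icc.mpr ⟨le_refl 1, hX1⟩⟩
  have hPkey : ∑ p ∈ Pf, (1:ℝ)/((p:ℝ)^2) < 1/F := by
    apply key F hF
    intro p hp
    rw [hPfdef, Finset.mem_filter] at hp
    exact ⟨hp.2.1, hp.2.2⟩
  have hPnn : 0 ≤ ∑ p ∈ Pf, (1:ℝ)/((p:ℝ)^2) := by
    apply Finset.sum_nonneg
    intro p _
    positivity
  calc (({n : ℕ | 0 < n ∧ (n : ℝ) ≤ x ∧ ∃ p : ℕ, p.Prime ∧ (p : ℝ) > F ∧ p ∣ n ∧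
        ∃ d : ℕ, d ∣ n ∧ 1 < d ∧ d % p = 1 % p}).ncard : ℝ)
      ≤ (B.card : ℝ) := by exact_mod_cast hcard
    _ ≤ ∑ t ∈ Pf ×ˢ Kf, ((X / (t.1 * (t.2*t.1+1)) : ℕ) : ℝ) := by exact_mod_cast hcard2
    _ ≤ ∑ t ∈ Pf ×ˢ Kf, x * ((1:ℝ)/((t.1:ℝ)^2) * (1/(t.2:ℝ))) := Finset.sum_le_sum hterm
    _ = x * ((∑ p ∈ Pf, (1:ℝ)/((p:ℝ)^2)) * (∑ k ∈ Kf, (1:ℝ)/(k:ℝ))) := by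
        rw [← Finset.mul_sum, Finset.sum_mul_sum, Finset.sum_product]
    _ < x * ((1/F) * (∑ k ∈ Kf, (1:ℝ)/(k:ℝ))) := by
        apply mul_lt_mul_of_pos_left _ hx0
        exact mul_lt_mul_of_pos_right hPkey hKpos
    _ ≤ x * ((1/F) * (Real.log x + 1)) := by
        apply mul_le_mul_of_nonneg_left _ hx0.le
        apply mul_le_mul_of_nonneg_left hK (by positivity)
    _ = x * (Real.log x + 1) / F := by ring
end

section
/- There exists a constant c such that for all sufficiently large x and all functions g, h : ℝ⁺ → ℝ⁺ with g(x) ≥ 2 and h(x) ≥ 2, the number of positive integers n ≤ x having a divisor d ≥ h(x) all of whose prime factors are less than g(x) is less than x(log(g(x)) + c)/log(h(x)). -/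
open Filter Finset Nat


-- log of a positive nat as sum over primeFactors
lemma log_eq_sum_fact (n : ℕ) (hn : n ≠ 0) :
    Real.log n = ∑ p ∈ n.primeFactors, (n.factorization p : ℝ) * Real.log p := by
  conv_lhs => rw [← Nat.factorization_prod_pow_eq_self hn]
  rw [Finsupp.prod, Nat.cast_prod, Real.log_prod, Nat.support_factorization]
  · exact Finset.sum_congr rfl fun p hp => by rw [Nat.cast_pow, Real.log_pow]
  · intro p hp
    have := Nat.prime_of_mem_primeFactors (Nat.support_factorization n ▸ hp)
    exact Nat.cast_ne_zero.mpr (pow_ne_zero _ this.pos.ne')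

lemma geom_tail (p : ℕ) (hp : 2 ≤ p) (b : ℕ) :
    ∑ i ∈ Finset.Ico 1 b, ((p:ℝ)^i)⁻¹ ≤ ((p:ℝ) - 1)⁻¹ := by
  have hp1 : (1:ℝ) < p := by exact_mod_cast hp
  have hps : (0:ℝ) < (p:ℝ) - 1 := by linarith
  rw [Finset.sum_Ico_eq_sum_range]
  have key : ((p:ℝ) - 1) * ∑ i ∈ Finset.range (b - 1), ((p:ℝ)^(1+i))⁻¹ ≤ 1 := by
    rw [Finset.mul_sum]
    have heq : ∀ i ∈ Finset.range (b-1),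
        ((p:ℝ) - 1) * ((p:ℝ)^(1+i))⁻¹ = ((p:ℝ)^i)⁻¹ - ((p:ℝ)^(i+1))⁻¹ := by
      intro i _
      have hpi : (p:ℝ)^i ≠ 0 := by positivity
      have hpi1 : (p:ℝ)^(i+1) ≠ 0 := by positivity
      rw [add_comm 1 i]
      field_simp
      ring
    rw [Finset.sum_congr rfl heq, Finset.sum_range_sub' (fun i => ((p:ℝ)^i)⁻¹)]
    simp only [pow_zero, inv_one]
    have : (0:ℝ) ≤ ((p:ℝ)^(b-1))⁻¹ := by positivity
    linarith
  rw [← le_div_iff₀' hps] at key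
  rw [one_div] at key; exact key

lemma fact_factorial_eq (p N : ℕ) (hp : p.Prime) :
    (N !).factorization p = ∑ i ∈ Finset.Ico 1 (Nat.log p N + 1), N / p ^ i := by
  haveI : Fact p.Prime := ⟨hp⟩
  rw [Nat.factorization_def _ hp]
  exact padicValNat_factorial (Nat.lt_succ_self _)

lemma fact_factorial_le (p N : ℕ) (hp : p.Prime) :
    ((N !).factorization p : ℝ) ≤ N * ((p:ℝ) - 1)⁻¹ := by
  rw [fact_factorial_eq p N hp]
  push_cast
  calc ∑ i ∈ Finset.Ico 1 (Nat.log p N + 1), ((N / p ^ i : ℕ) : ℝ)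
      ≤ ∑ i ∈ Finset.Ico 1 (Nat.log p N + 1), (N:ℝ) * ((p:ℝ)^i)⁻¹ := by
        apply Finset.sum_le_sum
        intro i _
        rw [← div_eq_mul_inv]
        have h1 : ((N / p ^ i : ℕ) : ℝ) ≤ (N:ℝ) / ((p:ℝ)^i) := by
          have hp0 : (0:ℝ) < (p:ℝ)^i := by
            have : (0:ℝ) < p := by exact_mod_cast hp.pos
            positivity
          rw [le_div_iff₀ hp0]
          exact_mod_cast Nat.div_mul_le_self N (p ^ i)
        exact h1
    _ = (N:ℝ) * ∑ i ∈ Finset.Ico 1 (Nat.log p N + 1), ((p:ℝ)^i)⁻¹ := by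
        rw [Finset.mul_sum]
    _ ≤ (N:ℝ) * ((p:ℝ) - 1)⁻¹ := by
        apply mul_le_mul_of_nonneg_left (geom_tail p hp.two_le _) (Nat.cast_nonneg N)

lemma fact_factorial_ge (p N : ℕ) (hp : p.Prime) (hpN : p ≤ N) :
    N / p ≤ (N !).factorization p := by
  rw [fact_factorial_eq p N hp]
  have h1 : 1 ∈ Finset.Ico 1 (Nat.log p N + 1) := by
    rw [Finset.mem_Ico]
    exact ⟨le_refl 1, Nat.succ_lt_succ (Nat.log_pos hp.one_lt hpN)⟩
  have := Finset.single_le_sum (f := fun i => N / p ^ i) (fun i _ => Nat.zero_le _) h1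
  simpa using this

lemma cheb (K : ℕ) (hK : 1 ≤ K) :
    ∑ p ∈ K.primesBelow, Real.log p ≤ K * Real.log 4 := by
  have h1 : ∑ p ∈ K.primesBelow, Real.log p = Real.log (∏ p ∈ K.primesBelow, (p:ℝ)) := by
    rw [Real.log_prod]
    intro p hp
    exact_mod_cast (Nat.prime_of_mem_primesBelow hp).pos.ne'
  rw [h1]
  have hKK : K - 1 + 1 = K := by omega
  have h2 : ((primorial (K-1) : ℕ) : ℝ) = ∏ p ∈ K.primesBelow, (p:ℝ) := by
    unfold primorial Nat.primesBelow
    rw [hKK]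
    push_cast
    rfl
  rw [← h2]
  have h3 : ((primorial (K-1):ℕ):ℝ) ≤ ((4:ℝ))^(K-1) := by
    exact_mod_cast primorial_le_4_pow (K-1)
  calc Real.log ((primorial (K-1):ℕ):ℝ) ≤ Real.log ((4:ℝ)^(K-1)) := by
        apply Real.log_le_log (by exact_mod_cast primorial_pos (K-1)) h3
    _ = (K-1 : ℕ) * Real.log 4 := Real.log_pow _ _
    _ ≤ K * Real.log 4 := by
        apply mul_le_mul_of_nonneg_right _ (Real.log_nonneg (by norm_num))
        exact_mod_cast Nat.sub_le K 1

lemma mertens1 (K : ℕ) (hK : 2 ≤ K) :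
    ∑ p ∈ K.primesBelow, Real.log p / p ≤ Real.log K + Real.log 4 := by
  have hK0 : (0:ℝ) < K := by exact_mod_cast Nat.lt_of_lt_of_le two_pos hK
  have hfacne : Nat.factorial K ≠ 0 := (Nat.factorial_pos K).ne'
  have hsub : K.primesBelow ⊆ (Nat.factorial K).primeFactors := by
    intro p hp
    have hpp := Nat.prime_of_mem_primesBelow hp
    have hplt := Nat.lt_of_mem_primesBelow hp
    exact Nat.mem_primeFactors.mpr ⟨hpp, Nat.dvd_factorial hpp.pos hplt.le, hfacne⟩
  have stepA : ∑ p ∈ K.primesBelow, ((K / p : ℕ) : ℝ) * Real.log p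
      ≤ Real.log (Nat.factorial K) := by
    rw [log_eq_sum_fact _ hfacne]
    calc ∑ p ∈ K.primesBelow, ((K / p : ℕ) : ℝ) * Real.log p
        ≤ ∑ p ∈ K.primesBelow, ((Nat.factorial K).factorization p : ℝ) * Real.log p := by
          apply Finset.sum_le_sum
          intro p hp
          have hpp := Nat.prime_of_mem_primesBelow hp
          have h1 : ((K / p : ℕ) : ℝ) ≤ ((Nat.factorial K).factorization p : ℝ) := by
            exact_mod_cast fact_factorial_ge p K hpp (Nat.lt_of_mem_primesBelow hp).le
          exact mul_le_mul_of_nonneg_right h1 (Real.log_nonneg (by exact_mod_cast hpp.one_lt.le))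
      _ ≤ _ := by
          apply Finset.sum_le_sum_of_subset_of_nonneg hsub
          intro p hp _
          have hpp := Nat.prime_of_mem_primeFactors hp
          have : (0:ℝ) ≤ Real.log p := Real.log_nonneg (by exact_mod_cast hpp.one_lt.le)
          positivity
  -- step B : real division bound
  have stepB : ∀ p ∈ K.primesBelow, (K:ℝ)/p * Real.log p
      ≤ ((K / p : ℕ) : ℝ) * Real.log p + Real.log p := by
    intro p hp
    have hpp := Nat.prime_of_mem_primesBelow hp
    have hp0 : (0:ℝ) < p := by exact_mod_cast hpp.pos
    have hlog : (0:ℝ) ≤ Real.log p := Real.log_nonneg (by exact_mod_cast hpp.one_lt.le)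
    have h2 : (K:ℝ)/p ≤ ((K / p : ℕ) : ℝ) + 1 := by
      rw [div_le_iff₀ hp0]
      have : K < (K / p + 1) * p := by
        calc K = p * (K/p) + K % p := (Nat.div_add_mod K p).symm
          _ < p * (K/p) + p := by have := Nat.mod_lt K hpp.pos; omega
          _ = (K/p+1)*p := by ring
      calc (K:ℝ) ≤ ((K / p + 1) * p : ℕ) := by exact_mod_cast this.le
        _ = (((K/p : ℕ):ℝ) + 1) * p := by push_cast; ring
    nlinarith
  -- combine
  have main : (K:ℝ) * ∑ p ∈ K.primesBelow, Real.log p / p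
      ≤ Real.log (Nat.factorial K) + (K:ℝ) * Real.log 4 := by
    rw [Finset.mul_sum]
    calc ∑ p ∈ K.primesBelow, (K:ℝ) * (Real.log p / p)
        = ∑ p ∈ K.primesBelow, (K:ℝ)/p * Real.log p := by
          apply Finset.sum_congr rfl; intro p _; ring
      _ ≤ ∑ p ∈ K.primesBelow, (((K / p : ℕ) : ℝ) * Real.log p + Real.log p) :=
          Finset.sum_le_sum stepB
      _ = (∑ p ∈ K.primesBelow, ((K / p : ℕ) : ℝ) * Real.log p)
            + ∑ p ∈ K.primesBelow, Real.log p := Finset.sum_add_distrib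
      _ ≤ Real.log (Nat.factorial K) + (K:ℝ) * Real.log 4 :=
          add_le_add stepA (cheb K (by omega))
  have hfacle : Real.log (Nat.factorial K) ≤ (K:ℝ) * Real.log K := by
    calc Real.log (Nat.factorial K) ≤ Real.log ((K:ℝ)^K) := by
          apply Real.log_le_log (by exact_mod_cast Nat.factorial_pos K)
          exact_mod_cast Nat.factorial_le_pow K
      _ = (K:ℝ) * Real.log K := by rw [Real.log_pow]
  have main2 : (K:ℝ) * ∑ p ∈ K.primesBelow, Real.log p / p
      ≤ (K:ℝ) * (Real.log K + Real.log 4) := by nlinarith [main, hfacle]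
  exact le_of_mul_le_mul_left main2 hK0

lemma term_bound (n : ℕ) (hn : 2 ≤ n) :
    Real.log n * (((n:ℝ)-1)⁻¹ - (n:ℝ)⁻¹)
      ≤ 8 * ((Real.sqrt ((n:ℝ)-1))⁻¹ - (Real.sqrt n)⁻¹) := by
  have hn1 : (1:ℝ) ≤ (n:ℝ) - 1 := by
    have : (2:ℝ) ≤ n := by exact_mod_cast hn
    linarith
  set a := Real.sqrt ((n:ℝ)-1) with ha_def
  set b := Real.sqrt (n:ℝ) with hb_def
  have ha2 : a^2 = (n:ℝ)-1 := Real.sq_sqrt (by linarith)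
  have hb2 : b^2 = (n:ℝ) := Real.sq_sqrt (by linarith)
  have ha1 : 1 ≤ a := by
    nlinarith [ha2, Real.sqrt_nonneg ((n:ℝ)-1)]
  have hb0 : 0 < b := by
    rw [hb_def]; apply Real.sqrt_pos.mpr; linarith
  have ha0 : 0 < a := lt_of_lt_of_le one_pos ha1
  have hab : a ≤ b := by
    rw [ha_def, hb_def]; exact Real.sqrt_le_sqrt (by linarith)
  have hb2a : b ≤ 2*a := by
    nlinarith
  have hL : Real.log n ≤ 2*b := by
    have h1 : Real.log b = Real.log n / 2 := by
      rw [hb_def, Real.log_sqrt (by positivity)]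
    have h2 : Real.log b ≤ b - 1 := Real.log_le_sub_one_of_pos hb0
    linarith
  have hLnn : 0 ≤ Real.log n := Real.log_nonneg (by linarith)
  have hdiff : ((n:ℝ)-1)⁻¹ - (n:ℝ)⁻¹ = (a^2*b^2)⁻¹ := by
    rw [← ha2, ← hb2]
    field_simp
    nlinarith
  have hdiff2 : a⁻¹ - b⁻¹ = (b-a)/(a*b) := by
    field_simp
  have hba : 1 ≤ (b - a) * (2*b) := by
    nlinarith
  calc Real.log n * (((n:ℝ)-1)⁻¹ - (n:ℝ)⁻¹) = Real.log n * (a^2*b^2)⁻¹ := by rw [hdiff]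
    _ ≤ (2*b) * (a^2*b^2)⁻¹ := by
        apply mul_le_mul_of_nonneg_right hL (by positivity)
    _ ≤ 8 * (b - a) / (a*b) := by
        rw [show 2*b * (a^2*b^2)⁻¹ = (2*b)/(a^2*b^2) by rw [div_eq_mul_inv],
          div_le_div_iff₀ (by positivity) (by positivity)]
        nlinarith [mul_pos ha0 hb0, mul_pos (mul_pos ha0 hb0) hb0,
          mul_pos (mul_pos (mul_pos ha0 ha0) hb0) hb0]
    _ = 8 * (a⁻¹ - b⁻¹) := by rw [hdiff2]; ring

lemma tailsum (K : ℕ) :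
    ∑ p ∈ K.primesBelow, Real.log p * (((p:ℝ)-1)⁻¹ - (p:ℝ)⁻¹) ≤ 8 := by
  have step1 : ∑ p ∈ K.primesBelow, Real.log p * (((p:ℝ)-1)⁻¹ - (p:ℝ)⁻¹)
      ≤ ∑ p ∈ K.primesBelow, 8 * ((Real.sqrt ((p:ℝ)-1))⁻¹ - (Real.sqrt p)⁻¹) := by
    apply Finset.sum_le_sum
    intro p hp
    exact term_bound p (Nat.prime_of_mem_primesBelow hp).two_le
  have hmono : ∀ n : ℕ, 2 ≤ n → 0 ≤ 8 * ((Real.sqrt ((n:ℝ)-1))⁻¹ - (Real.sqrt (n:ℝ))⁻¹) := by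
    intro n hn
    have h2 : (2:ℝ) ≤ n := by exact_mod_cast hn
    have h1 : (0:ℝ) < (n:ℝ) - 1 := by linarith
    have hs1 : 0 < Real.sqrt ((n:ℝ)-1) := Real.sqrt_pos.mpr h1
    have hs2 : Real.sqrt ((n:ℝ)-1) ≤ Real.sqrt (n:ℝ) := Real.sqrt_le_sqrt (by linarith)
    have := inv_anti₀ hs1 hs2
    linarith
  have step2 : ∑ p ∈ K.primesBelow, 8 * ((Real.sqrt ((p:ℝ)-1))⁻¹ - (Real.sqrt p)⁻¹)
      ≤ ∑ n ∈ Finset.Ico 2 K, 8 * ((Real.sqrt ((n:ℝ)-1))⁻¹ - (Real.sqrt (n:ℝ))⁻¹) := by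
    apply Finset.sum_le_sum_of_subset_of_nonneg
    · intro p hp
      rw [Finset.mem_Ico]
      exact ⟨(Nat.prime_of_mem_primesBelow hp).two_le, Nat.lt_of_mem_primesBelow hp⟩
    · intro n hn _
      exact hmono n (Finset.mem_Ico.mp hn).1
  have step3 : ∑ n ∈ Finset.Ico 2 K, 8 * ((Real.sqrt ((n:ℝ)-1))⁻¹ - (Real.sqrt (n:ℝ))⁻¹) ≤ 8 := by
    rw [Finset.sum_Ico_eq_sum_range]
    set F : ℕ → ℝ := fun j => 8 * (Real.sqrt ((j:ℝ)+1))⁻¹ with hF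
    have heq2 : ∀ i ∈ Finset.range (K - 2),
        8 * ((Real.sqrt (((2+i:ℕ):ℝ)-1))⁻¹ - (Real.sqrt ((2+i:ℕ):ℝ))⁻¹) = F i - F (i+1) := by
      intro i _
      have h1 : ((2+i:ℕ):ℝ) - 1 = (i:ℝ) + 1 := by push_cast; ring
      have h2 : ((2+i:ℕ):ℝ) = ((i+1:ℕ):ℝ) + 1 := by push_cast; ring
      rw [h1, h2, hF]
      ring
    rw [Finset.sum_congr rfl heq2, Finset.sum_range_sub' F (K-2)]
    have h3 : 0 ≤ F (K-2) := by rw [hF]; positivity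
    have h4 : F 0 = 8 := by rw [hF]; norm_num
    linarith
  linarith

lemma mertens2 (K : ℕ) (hK : 2 ≤ K) :
    ∑ p ∈ K.primesBelow, Real.log p * ((p:ℝ)-1)⁻¹ ≤ Real.log K + Real.log 4 + 8 := by
  have hsplit : ∀ p ∈ K.primesBelow, Real.log p * ((p:ℝ)-1)⁻¹
      = Real.log p / p + Real.log p * (((p:ℝ)-1)⁻¹ - (p:ℝ)⁻¹) := by
    intro p _
    rw [div_eq_mul_inv]
    ring
  rw [Finset.sum_congr rfl hsplit, Finset.sum_add_distrib]
  have := mertens1 K hK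
  have := tailsum K
  linarith

theorem stmt3 :
    ∃ c : ℝ, ∀ᶠ x : ℝ in atTop, ∀ g h : ℝ → ℝ, g x ≥ 2 → h x ≥ 2 →
      ({n : ℕ | 0 < n ∧ (n : ℝ) ≤ x ∧ ∃ d : ℕ, d ∣ n ∧ (d : ℝ) ≥ h x ∧
          ∀ p : ℕ, p.Prime → p ∣ d → (p : ℝ) < g x}.ncard : ℝ)
        < x * (Real.log (g x) + c) / Real.log (h x) := by
  classical
  refine ⟨Real.log 2 + Real.log 4 + 9, ?_⟩
  filter_upwards [eventually_ge_atTop (1:ℝ)] with x hx1 g h hg hh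
  set G := g x with hGdef
  set H := h x with hHdef
  have hG2 : (2:ℝ) ≤ G := hg
  have hH2 : (2:ℝ) ≤ H := hh
  have hx0 : (0:ℝ) < x := lt_of_lt_of_le one_pos hx1
  set N := ⌊x⌋₊ with hNdef
  have hNx : (N:ℝ) ≤ x := Nat.floor_le hx0.le
  set P : Finset ℕ := (N+1).primesBelow.filter (fun p => (p:ℝ) < G) with hP
  set W : ℕ → ℝ := fun n => ∑ p ∈ P, (n.factorization p : ℝ) * Real.log p with hW
  have hPlog : ∀ p ∈ P, (0:ℝ) ≤ Real.log p := by
    intro p hp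
    rw [hP, Finset.mem_filter] at hp
    have hpp := Nat.prime_of_mem_primesBelow hp.1
    exact Real.log_nonneg (by exact_mod_cast hpp.one_lt.le)
  have hWnn : ∀ n : ℕ, 0 ≤ W n := by
    intro n
    apply Finset.sum_nonneg
    intro p hp
    exact mul_nonneg (Nat.cast_nonneg _) (hPlog p hp)
  set F : Finset ℕ := (Finset.Icc 1 N).filter
      (fun n => ∃ d : ℕ, d ∣ n ∧ (d:ℝ) ≥ H ∧ ∀ p : ℕ, p.Prime → p ∣ d → (p:ℝ) < G) with hF
  have hsetF : {n : ℕ | 0 < n ∧ (n:ℝ) ≤ x ∧ ∃ d : ℕ, d ∣ n ∧ (d:ℝ) ≥ H ∧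
      ∀ p : ℕ, p.Prime → p ∣ d → (p:ℝ) < G} = ↑F := by
    ext n
    simp only [hF, Set.mem_setOf_eq, Finset.coe_filter, Finset.mem_Icc]
    constructor
    · rintro ⟨h1, h2, h3⟩
      exact ⟨⟨h1, Nat.le_floor h2⟩, h3⟩
    · rintro ⟨⟨h1, h2⟩, h3⟩
      refine ⟨h1, ?_, h3⟩
      calc (n:ℝ) ≤ N := by exact_mod_cast h2
        _ ≤ x := hNx
  rw [hsetF, Set.ncard_coe_finset]
  have hlogH : 0 < Real.log H := Real.log_pos (by linarith)
  have hlogG0 : 0 ≤ Real.log G := Real.log_nonneg (by linarith)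
  -- step A
  have stepA : ∀ n ∈ F, Real.log H ≤ W n := by
    intro n hn
    rw [hF, Finset.mem_filter, Finset.mem_Icc] at hn
    obtain ⟨⟨hn1, hnN⟩, d, hdn, hdH, hdsm⟩ := hn
    have hd2 : 2 ≤ d := by exact_mod_cast hH2.trans hdH
    have hd0 : d ≠ 0 := by omega
    have hn0 : n ≠ 0 := by omega
    have h1 : Real.log H ≤ Real.log d := Real.log_le_log (by linarith) hdH
    have hsub : d.primeFactors ⊆ P := by
      intro p hp
      have hpp := Nat.prime_of_mem_primeFactors hp
      have hpd := Nat.dvd_of_mem_primeFactors hp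
      rw [hP, Finset.mem_filter]
      refine ⟨Nat.mem_primesBelow.mpr ⟨?_, hpp⟩, hdsm p hpp hpd⟩
      have hpn : p ≤ n := Nat.le_of_dvd (by omega) (hpd.trans hdn)
      omega
    have h3 : Real.log d ≤ W n := by
      rw [log_eq_sum_fact d hd0]
      calc ∑ p ∈ d.primeFactors, (d.factorization p : ℝ) * Real.log p
          ≤ ∑ p ∈ d.primeFactors, (n.factorization p : ℝ) * Real.log p := by
            apply Finset.sum_le_sum
            intro p hp
            have hpp := Nat.prime_of_mem_primeFactors hp
            have hle : d.factorization p ≤ n.factorization p :=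
              Finsupp.le_def.mp ((Nat.factorization_le_iff_dvd hd0 hn0).mpr hdn) p
            exact mul_le_mul_of_nonneg_right (by exact_mod_cast hle)
              (Real.log_nonneg (by exact_mod_cast hpp.one_lt.le))
        _ ≤ W n := by
            rw [hW]
            apply Finset.sum_le_sum_of_subset_of_nonneg hsub
            intro p hp _
            exact mul_nonneg (Nat.cast_nonneg _) (hPlog p hp)
    linarith
  -- step B
  have stepB : (F.card : ℝ) * Real.log H ≤ ∑ n ∈ F, W n := by
    calc (F.card : ℝ) * Real.log H = ∑ _n ∈ F, Real.log H := by
          rw [Finset.sum_const, nsmul_eq_mul]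
      _ ≤ ∑ n ∈ F, W n := Finset.sum_le_sum stepA
  -- step C
  have stepC : ∑ n ∈ F, W n ≤ ∑ n ∈ Finset.Icc 1 N, W n := by
    apply Finset.sum_le_sum_of_subset_of_nonneg (by rw [hF]; exact Finset.filter_subset _ _)
    intro n _ _
    exact hWnn n
  -- step D : swap sums and use factorial
  have hfactor : ∀ p : ℕ, ∑ n ∈ Finset.Icc 1 N, n.factorization p
      = (Nat.factorial N).factorization p := by
    intro p
    have h1 : Nat.factorial N = ∏ n ∈ Finset.Icc 1 N, n := by
      rw [← Finset.Ico_add_one_right_eq_Icc, Finset.prod_Ico_id_eq_factorial]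
    rw [h1, Nat.factorization_prod (fun i hi => by
      rw [Finset.mem_Icc] at hi; omega)]
    rw [Finset.sum_apply']
  have stepD : ∑ n ∈ Finset.Icc 1 N, W n
      = ∑ p ∈ P, ((Nat.factorial N).factorization p : ℝ) * Real.log p := by
    rw [hW, Finset.sum_comm]
    apply Finset.sum_congr rfl
    intro p _
    rw [← Finset.sum_mul]
    congr 1
    rw [← hfactor p]
    push_cast
    rfl
  -- step E
  have stepE : ∑ p ∈ P, ((Nat.factorial N).factorization p : ℝ) * Real.log p
      ≤ (N:ℝ) * ∑ p ∈ P, Real.log p * ((p:ℝ)-1)⁻¹ := by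
    rw [Finset.mul_sum]
    apply Finset.sum_le_sum
    intro p hp
    have hpp : p.Prime := by
      rw [hP, Finset.mem_filter] at hp
      exact Nat.prime_of_mem_primesBelow hp.1
    calc ((Nat.factorial N).factorization p : ℝ) * Real.log p
        ≤ ((N:ℝ) * ((p:ℝ)-1)⁻¹) * Real.log p :=
          mul_le_mul_of_nonneg_right (fact_factorial_le p N hpp) (hPlog p hp)
      _ = (N:ℝ) * (Real.log p * ((p:ℝ)-1)⁻¹) := by ring
  -- step F : Mertens
  set K := ⌈G⌉₊ with hKdef
  have hGK : G ≤ (K:ℝ) := Nat.le_ceil G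
  have hK2 : 2 ≤ K := by exact_mod_cast hG2.trans hGK
  have hPK : P ⊆ K.primesBelow := by
    intro p hp
    rw [hP, Finset.mem_filter] at hp
    obtain ⟨hp1, hp2⟩ := hp
    have hpp := Nat.prime_of_mem_primesBelow hp1
    refine Nat.mem_primesBelow.mpr ⟨?_, hpp⟩
    exact_mod_cast lt_of_lt_of_le hp2 hGK
  have stepF : ∑ p ∈ P, Real.log p * ((p:ℝ)-1)⁻¹
      ≤ ∑ p ∈ K.primesBelow, Real.log p * ((p:ℝ)-1)⁻¹ := by
    apply Finset.sum_le_sum_of_subset_of_nonneg hPK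
    intro p hp _
    have hpp := Nat.prime_of_mem_primesBelow hp
    have h2p : (2:ℝ) ≤ p := by exact_mod_cast hpp.two_le
    apply mul_nonneg (Real.log_nonneg (by linarith))
    rw [inv_nonneg]
    linarith
  have hKG : Real.log K ≤ Real.log G + Real.log 2 := by
    have h1 : (K:ℝ) ≤ 2*G := by
      have h2 := Nat.ceil_lt_add_one (show (0:ℝ) ≤ G by linarith)
      linarith
    calc Real.log K ≤ Real.log (2*G) := Real.log_le_log (by positivity) h1
      _ = Real.log 2 + Real.log G := Real.log_mul (by norm_num) (by linarith)
      _ = Real.log G + Real.log 2 := by ring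
  -- combine
  have final : (F.card : ℝ) * Real.log H
      ≤ x * (Real.log G + (Real.log 2 + Real.log 4 + 8)) := by
    have m2 := mertens2 K hK2
    have hNnn : (0:ℝ) ≤ N := Nat.cast_nonneg N
    calc (F.card : ℝ) * Real.log H ≤ ∑ n ∈ F, W n := stepB
      _ ≤ ∑ n ∈ Finset.Icc 1 N, W n := stepC
      _ = ∑ p ∈ P, ((Nat.factorial N).factorization p : ℝ) * Real.log p := stepD
      _ ≤ (N:ℝ) * ∑ p ∈ P, Real.log p * ((p:ℝ)-1)⁻¹ := stepE
      _ ≤ (N:ℝ) * (Real.log G + (Real.log 2 + Real.log 4 + 8)) := by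
          apply mul_le_mul_of_nonneg_left _ hNnn
          calc ∑ p ∈ P, Real.log p * ((p:ℝ)-1)⁻¹
              ≤ ∑ p ∈ K.primesBelow, Real.log p * ((p:ℝ)-1)⁻¹ := stepF
            _ ≤ Real.log K + Real.log 4 + 8 := m2
            _ ≤ Real.log G + (Real.log 2 + Real.log 4 + 8) := by linarith
      _ ≤ x * (Real.log G + (Real.log 2 + Real.log 4 + 8)) := by
          apply mul_le_mul_of_nonneg_right hNx
          have := Real.log_nonneg (show (1:ℝ) ≤ 2 by norm_num)
          have := Real.log_nonneg (show (1:ℝ) ≤ 4 by norm_num)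
          linarith
  have step1 : (F.card : ℝ) ≤ x * (Real.log G + (Real.log 2 + Real.log 4 + 8)) / Real.log H := by
    rw [le_div_iff₀ hlogH]
    exact final
  apply lt_of_le_of_lt step1
  apply div_lt_div_of_pos_right _ hlogH
  have h2 := Real.log_nonneg (show (1:ℝ) ≤ 2 by norm_num)
  nlinarith
end

section
/- Let G be a finite group with a normal Sylow p-subgroup P of order p, and suppose G is generated by two nontrivial elements u and v whose orders k and ℓ are both coprime to p. Then gcd(k, p−1) ≠ 1 and gcd(ℓ, p−1) ≠ 1. -/
private lemma stmt10_aux (G : Type*) [Group G] [Finite G] (p : ℕ) (hp : p.Prime)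
    (P : Subgroup G) (hPn : P.Normal) (hPcard : Nat.card P = p)
    (hSylow : ¬ p ^ 2 ∣ Nat.card G)
    (u v : G)
    (hgen : Subgroup.closure {u, v} = ⊤)
    (hkp : Nat.Coprime (orderOf u) p) (hlp : Nat.Coprime (orderOf v) p)
    (hone : Nat.gcd (orderOf u) (p - 1) = 1) : False := by
  haveI := hPn
  haveI : Fact p.Prime := ⟨hp⟩
  haveI : IsCyclic ↥P := isCyclic_of_prime_card hPcard
  letI : CommGroup ↥P := IsCyclic.commGroup
  set C := Subgroup.centralizer (P : Set G) with hCdef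
  have hPC : P ≤ C := by
    intro x hx
    rw [Subgroup.mem_centralizer_iff]
    intro h hh
    exact congrArg Subtype.val (mul_comm (⟨h, hh⟩ : P) (⟨x, hx⟩ : P))
  have hCn : C.Normal := by
    constructor
    intro c hc g
    rw [Subgroup.mem_centralizer_iff]
    intro h hh
    have hmem : g⁻¹ * h * g ∈ P := by simpa using hPn.conj_mem h hh g⁻¹
    have key : (g⁻¹ * h * g) * c = c * (g⁻¹ * h * g) := hc _ hmem
    have := congrArg (fun z => g * z * g⁻¹) key
    simpa [mul_assoc] using this
  -- u centralizes P
  have huC : u ∈ C := by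
    have h1 : orderOf (MulAut.conjNormal (H := P) u) ∣ orderOf u :=
      orderOf_map_dvd _ u
    have h2 : orderOf (MulAut.conjNormal (H := P) u) ∣ p - 1 := by
      have := orderOf_dvd_natCard (MulAut.conjNormal (H := P) u)
      rwa [IsCyclic.card_mulAut, hPcard, Nat.totient_prime hp] at this
    have h3 : orderOf (MulAut.conjNormal (H := P) u) = 1 :=
      Nat.eq_one_of_dvd_one (hone ▸ Nat.dvd_gcd h1 h2)
    have h4 : MulAut.conjNormal (H := P) u = 1 := orderOf_eq_one_iff.mp h3
    rw [Subgroup.mem_centralizer_iff]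
    intro h hh
    have h5 : u * h * u⁻¹ = h := by
      have := congrArg Subtype.val (congrArg (fun (f : MulAut ↥P) => f ⟨h, hh⟩) h4)
      simpa [MulAut.conjNormal_apply] using this
    have h6 : u * h = h * u := mul_inv_eq_iff_eq_mul.mp h5
    exact h6.symm
  -- the Sylow p-subgroup inside C
  set P' := P.subgroupOf C with hP'def
  have hP'card : Nat.card P' = p := by
    rw [← hPcard]
    exact Nat.card_congr (Subgroup.subgroupOfEquivOfLe hPC).toEquiv
  have hP'n : P'.Normal := by
    constructor
    intro x hx c
    rw [Subgroup.mem_subgroupOf] at hx ⊢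
    have hcomm : (x : G) * (c : G) = (c : G) * (x : G) := c.2 _ hx
    have : (c : G) * (x : G) * (c : G)⁻¹ = (x : G) := by
      rw [← hcomm]; group
    simpa [this] using hx
  haveI := hP'n
  have hCdvd : Nat.card C ∣ Nat.card G := Subgroup.card_subgroup_dvd_card C
  have hmulC : Nat.card P' * P'.index = Nat.card C := Subgroup.card_mul_index P'
  have hpind : ¬ p ∣ P'.index := by
    intro hd
    apply hSylow
    have : p * p ∣ Nat.card C := by
      rw [← hmulC, hP'card]; exact mul_dvd_mul_left p hd
    exact (sq p ▸ this).trans hCdvd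
  have hcop : Nat.Coprime (Nat.card P') P'.index := by
    rw [hP'card]; exact hp.coprime_iff_not_dvd.mpr hpind
  obtain ⟨H, hH⟩ := Subgroup.exists_right_complement'_of_coprime hcop
  have hcardH : p * Nat.card H = Nat.card C := by
    rw [← hP'card]; exact hH.card_mul
  have hHcop : Nat.Coprime (Nat.card H) p := by
    refine (hp.coprime_iff_not_dvd.mpr ?_).symm
    intro hd
    apply hSylow
    have : p * p ∣ Nat.card C := by
      rw [← hcardH]; exact mul_dvd_mul_left p hd
    exact (sq p ▸ this).trans hCdvd
  set Q := H.map C.subtype with hQdef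
  have hQsub : ∀ x : G, x ∈ Q → x ∈ C ∧ Nat.Coprime (orderOf x) p := by
    rintro x ⟨h, hh, rfl⟩
    refine ⟨h.2, ?_⟩
    have h1 : orderOf (C.subtype h) = orderOf h :=
      orderOf_injective C.subtype Subtype.coe_injective h
    have h2 : orderOf h ∣ Nat.card H := Subgroup.orderOf_dvd_natCard H hh
    exact hHcop.coprime_dvd_left (h1 ▸ h2)
  have hmemQ : ∀ x : G, x ∈ C → Nat.Coprime (orderOf x) p → x ∈ Q := by
    intro x hxC hxord
    obtain ⟨⟨a, b⟩, hab⟩ := hH.2 (⟨x, hxC⟩ : C)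
    simp only at hab
    have haP : ((a : C) : G) ∈ P := Subgroup.mem_subgroupOf.mp a.2
    have hcomm : Commute (a : C) (b : C) := by
      apply Subtype.ext
      push_cast
      exact (b : C).2 _ haP
    set n := orderOf (⟨x, hxC⟩ : C) with hn
    have hxn : ((a : C) * (b : C)) ^ n = 1 := by
      rw [hab]; exact pow_orderOf_eq_one _
    rw [hcomm.mul_pow] at hxn
    have hba : (a : C) ^ n = ((b : C) ^ n)⁻¹ := eq_inv_of_mul_eq_one_left hxn
    have haP' : (a : C) ^ n ∈ P' := P'.pow_mem a.2 n
    have haH : (a : C) ^ n ∈ H := hba ▸ H.inv_mem (H.pow_mem b.2 n)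
    have h1 : (a : C) ^ n = 1 := Subgroup.disjoint_def.mp hH.disjoint haP' haH
    have h2 : orderOf (a : C) ∣ n := orderOf_dvd_of_pow_eq_one h1
    have h3 : orderOf (a : C) ∣ p := hP'card ▸ Subgroup.orderOf_dvd_natCard P' a.2
    have h4 : Nat.Coprime n p := by
      have h4' : orderOf x = n :=
        orderOf_injective C.subtype Subtype.coe_injective ⟨x, hxC⟩
      rwa [h4'] at hxord
    have h5 : orderOf (a : C) = 1 := Nat.eq_one_of_dvd_one (h4 ▸ Nat.dvd_gcd h2 h3)
    have h6 : (a : C) = 1 := orderOf_eq_one_iff.mp h5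
    rw [h6, one_mul] at hab
    exact ⟨(b : C), b.2, congrArg Subtype.val hab⟩
  have hQn : Q.Normal := by
    constructor
    intro q hq g
    obtain ⟨hqC, hqord⟩ := hQsub q hq
    apply hmemQ
    · exact hCn.conj_mem q hqC g
    · have hoc : orderOf ((MulAut.conj g) q) = orderOf q :=
        orderOf_injective (MulAut.conj g).toMonoidHom (MulEquiv.injective _) q
      rwa [show g * q * g⁻¹ = (MulAut.conj g) q from (MulAut.conj_apply g q).symm, hoc]
  have huQ : u ∈ Q := hmemQ u huC hkp
  haveI := hQn
  set π := QuotientGroup.mk' Q with hπdef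
  have hπsurj : Function.Surjective π := QuotientGroup.mk'_surjective Q
  have hπu : π u = 1 := (QuotientGroup.eq_one_iff u).mpr huQ
  have htop : Subgroup.closure ({π u, π v} : Set (G ⧸ Q)) = ⊤ := by
    rw [← Set.image_pair, ← MonoidHom.map_closure, hgen]
    exact Subgroup.map_top_of_surjective π hπsurj
  have hcyc : ∀ x : G ⧸ Q, x ∈ Subgroup.zpowers (π v) := by
    intro x
    have hx : x ∈ Subgroup.closure ({π u, π v} : Set (G ⧸ Q)) :=
      htop ▸ Subgroup.mem_top x
    have hle : Subgroup.closure ({π u, π v} : Set (G ⧸ Q)) ≤ Subgroup.zpowers (π v) := by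
      rw [Subgroup.closure_le]
      rintro y (rfl | rfl)
      · rw [hπu]; exact Subgroup.one_mem _
      · exact Subgroup.mem_zpowers _
    exact hle hx
  have hQcard : Nat.card Q = Nat.card H :=
    (Nat.card_congr (Subgroup.equivMapOfInjective H C.subtype
      Subtype.coe_injective).toEquiv).symm
  have hpq : ¬ p ∣ Nat.card Q := by
    rw [hQcard]
    exact hp.coprime_iff_not_dvd.mp hHcop.symm
  have hpG : p ∣ Nat.card G := hPcard ▸ Subgroup.card_subgroup_dvd_card P
  have hmulQ : Nat.card Q * Q.index = Nat.card G := Subgroup.card_mul_index Q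
  have hpdvd : p ∣ Nat.card (G ⧸ Q) := by
    rw [← Subgroup.index_eq_card]
    rcases (Nat.Prime.dvd_mul hp).mp (hmulQ ▸ hpG) with h | h
    · exact absurd h hpq
    · exact h
  obtain ⟨x, hx⟩ := exists_prime_orderOf_dvd_card' (G := G ⧸ Q) p hpdvd
  have h1 : orderOf x ∣ orderOf (π v) := orderOf_dvd_of_mem_zpowers (hcyc x)
  have h2 : p ∣ orderOf v := hx ▸ h1.trans (orderOf_map_dvd π v)
  exact absurd h2 (hp.coprime_iff_not_dvd.mp hlp.symm)

theorem stmt10 (G : Type*) [Group G] [Finite G] (p : ℕ) (hp : p.Prime)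
    (P : Subgroup G) (hPn : P.Normal) (hPcard : Nat.card P = p)
    (hSylow : ¬ p ^ 2 ∣ Nat.card G)
    (u v : G) (hu : u ≠ 1) (hv : v ≠ 1)
    (hgen : Subgroup.closure {u, v} = ⊤)
    (k ℓ : ℕ) (hk : orderOf u = k) (hl : orderOf v = ℓ)
    (hkp : Nat.Coprime k p) (hlp : Nat.Coprime ℓ p) :
    Nat.gcd k (p - 1) ≠ 1 ∧ Nat.gcd ℓ (p - 1) ≠ 1 := by
  subst hk hl
  constructor
  · intro h1
    exact stmt10_aux G p hp P hPn hPcard hSylow u v hgen hkp hlp h1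
  · intro h1
    have hgen' : Subgroup.closure {v, u} = ⊤ := by rwa [Set.pair_comm]
    exact stmt10_aux G p hp P hPn hPcard hSylow v u hgen' hlp hkp h1
end

section
/- Let G be a finite group with a normal Sylow p-subgroup P of order p, generated by two nontrivial elements u and v of orders k and ℓ coprime to p. If gcd(k, p−1) = gcd(ℓ, p−1) = 2, then p divides the order of uv. -/
open Subgroup

private lemma dihedral_aux {Q : Type*} [Group Q] [Finite Q] (a b : Q)
    (ha : a ^ 2 = 1) (hb : b ^ 2 = 1) (hgen : Subgroup.closure {a, b} = ⊤) :
    Nat.card Q ∣ 2 * orderOf (a * b) := by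
  have haa : a * a = 1 := by rw [← sq]; exact ha
  have hbb : b * b = 1 := by rw [← sq]; exact hb
  have ha' : a⁻¹ = a := inv_eq_of_mul_eq_one_right haa
  have hb' : b⁻¹ = b := inv_eq_of_mul_eq_one_right hbb
  set R : Subgroup Q := Subgroup.zpowers (a * b) with hR
  have conj_pow_mem : ∀ g : Q, g * (a * b) * g⁻¹ = (a * b)⁻¹ →
      ∀ n : ℤ, g * (a * b) ^ n * g⁻¹ ∈ R := by
    intro g hg n
    have h1 : g * (a * b) ^ n * g⁻¹ = (a * b) ^ (-n) := by
      rw [← conj_zpow, hg, zpow_neg, inv_zpow]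
    rw [h1]
    exact Subgroup.zpow_mem R (Subgroup.mem_zpowers _) _
  have norm : ∀ g : Q, g * (a * b) * g⁻¹ = (a * b)⁻¹ → g ∈ Subgroup.normalizer (R : Set Q) := by
    intro g hg
    have e1 : a * b = g⁻¹ * (a * b)⁻¹ * g := by rw [← hg]; group
    have hg'' : g⁻¹ * (a * b) * g⁻¹⁻¹ = (a * b)⁻¹ := by
      have := congrArg Inv.inv e1
      rw [inv_inv]
      simpa [mul_inv_rev, mul_assoc] using this.symm
    rw [Subgroup.mem_normalizer_iff]
    intro h
    constructor
    · intro hh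
      obtain ⟨n, hn⟩ := Subgroup.mem_zpowers_iff.mp hh
      rw [← hn]
      exact conj_pow_mem g hg n
    · intro hh
      obtain ⟨n, hn⟩ := Subgroup.mem_zpowers_iff.mp hh
      have he : h = g⁻¹ * (a * b) ^ n * g⁻¹⁻¹ := by rw [hn, inv_inv]; group
      rw [he]
      exact conj_pow_mem g⁻¹ hg'' n
  have hconj_a : a * (a * b) * a⁻¹ = (a * b)⁻¹ := by
    rw [mul_inv_rev, ha', hb']
    calc a * (a * b) * a = ((a * a) * b) * a := by group
      _ = b * a := by rw [haa, one_mul]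
  have hconj_b : b * (a * b) * b⁻¹ = (a * b)⁻¹ := by
    rw [mul_inv_rev, ha', hb']
    calc b * (a * b) * b = (b * a) * (b * b) := by group
      _ = b * a := by rw [hbb, mul_one]
  have hRn : R.Normal := by
    rw [← Subgroup.normalizer_eq_top_iff, eq_top_iff, ← hgen]
    refine (Subgroup.closure_le _).mpr ?_
    rintro x (rfl | rfl)
    · exact norm _ hconj_a
    · exact norm _ hconj_b
  have hcard : Nat.card R * R.index = Nat.card Q := Subgroup.card_mul_index R
  have hcardR : Nat.card R = orderOf (a * b) := Nat.card_zpowers (a * b)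
  -- show the quotient has order dividing 2
  let π := QuotientGroup.mk' R
  have hπab : π (a * b) = 1 := (QuotientGroup.eq_one_iff _).mpr (Subgroup.mem_zpowers _)
  have hπb : π b = (π a)⁻¹ := by
    have h1 : π a * π b = 1 := by rw [← map_mul]; exact hπab
    exact eq_inv_of_mul_eq_one_right h1
  have htop : Subgroup.zpowers (π a) = ⊤ := by
    rw [eq_top_iff]
    have : Subgroup.map π ⊤ = ⊤ :=
      Subgroup.map_top_of_surjective π (QuotientGroup.mk'_surjective R)
    rw [← this, ← hgen, MonoidHom.map_closure]
    refine Subgroup.closure_le _ |>.mpr ?_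
    rintro x ⟨y, (rfl | rfl), rfl⟩
    · exact Subgroup.mem_zpowers _
    · rw [hπb]; exact Subgroup.inv_mem _ (Subgroup.mem_zpowers _)
  have hindex : R.index ∣ 2 := by
    have h1 : R.index = Nat.card (Q ⧸ R) := Subgroup.index_eq_card R
    have h2 : Nat.card (Q ⧸ R) = orderOf (π a) := by
      rw [← Nat.card_zpowers (π a), ← Subgroup.card_top (G := Q ⧸ R), htop]
    have h3 : orderOf (π a) ∣ 2 := by
      apply orderOf_dvd_of_pow_eq_one
      rw [← map_pow, ha, map_one]
    rw [h1, h2]; exact h3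
  calc Nat.card Q = Nat.card R * R.index := hcard.symm
    _ = orderOf (a * b) * R.index := by rw [hcardR]
    _ ∣ orderOf (a * b) * 2 := mul_dvd_mul_left _ hindex
    _ = 2 * orderOf (a * b) := mul_comm _ _

theorem stmt11 (G : Type*) [Group G] [Finite G] (p : ℕ) (hp : p.Prime)
    (P : Subgroup G) (hPn : P.Normal) (hPcard : Nat.card P = p)
    (hSylow : ¬ p ^ 2 ∣ Nat.card G)
    (u v : G) (hu : u ≠ 1) (hv : v ≠ 1)
    (hgen : Subgroup.closure {u, v} = ⊤)
    (k ℓ : ℕ) (hk : orderOf u = k) (hl : orderOf v = ℓ)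
    (hkp : Nat.Coprime k p) (hlp : Nat.Coprime ℓ p)
    (hk2 : Nat.gcd k (p - 1) = 2) (hl2 : Nat.gcd ℓ (p - 1) = 2) :
    p ∣ orderOf (u * v) := by
  haveI : Fact p.Prime := ⟨hp⟩
  haveI := hPn
  subst hk hl
  -- p is odd
  have hp2 : p ≠ 2 := by
    intro h
    subst h
    simp at hk2
  -- the centralizer C of P
  set C : Subgroup G := Subgroup.centralizer (P : Set G) with hC
  have hCn : C.Normal := by
    constructor
    intro x hx g
    rw [Subgroup.mem_centralizer_iff] at hx ⊢
    intro h hh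
    have hmem : g⁻¹ * h * g ∈ (P : Set G) := by
      simpa using hPn.conj_mem h hh g⁻¹
    have hx' := hx (g⁻¹ * h * g) hmem
    calc h * (g * x * g⁻¹) = g * ((g⁻¹ * h * g) * x) * g⁻¹ := by group
      _ = g * (x * (g⁻¹ * h * g)) * g⁻¹ := by rw [hx']
      _ = g * x * g⁻¹ * h := by group
  haveI : IsCyclic ↥P := isCyclic_of_prime_card hPcard
  haveI : IsMulCommutative ↥P := ⟨⟨fun a b => by
    letI : CommGroup ↥P := IsCyclic.commGroup
    exact mul_comm a b⟩⟩
  have hPC : P ≤ C := Subgroup.le_centralizer P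
  -- u^2 and v^2 centralize P
  have hAutCard : Nat.card (MulAut ↥P) = p - 1 := by
    rw [IsCyclic.card_mulAut, hPcard, Nat.totient_prime hp]
  have hmem2 : ∀ w : G, Nat.gcd (orderOf w) (p - 1) = 2 → w ^ 2 ∈ C := by
    intro w hw2
    have h1 : orderOf (MulAut.conjNormal (H := P) w) ∣ orderOf w :=
      orderOf_map_dvd _ w
    have h2 : orderOf (MulAut.conjNormal (H := P) w) ∣ p - 1 := by
      rw [← hAutCard]; exact orderOf_dvd_natCard _
    have h3 : orderOf (MulAut.conjNormal (H := P) w) ∣ 2 := by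
      rw [← hw2]; exact Nat.dvd_gcd h1 h2
    have h4 : MulAut.conjNormal (H := P) (w ^ 2) = 1 := by
      rw [map_pow]
      exact orderOf_dvd_iff_pow_eq_one.mp h3
    rw [Subgroup.mem_centralizer_iff]
    intro h hh
    have h5 : (MulAut.conjNormal (H := P) (w ^ 2)) ⟨h, hh⟩ = ⟨h, hh⟩ := by
      rw [h4]; rfl
    have h6 : w ^ 2 * h * (w ^ 2)⁻¹ = h := congrArg Subtype.val h5
    calc h * w ^ 2 = (w ^ 2 * h * (w ^ 2)⁻¹) * w ^ 2 := by rw [h6]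
      _ = w ^ 2 * h := by group
  have hu2C : u ^ 2 ∈ C := hmem2 u hk2
  have hv2C : v ^ 2 ∈ C := hmem2 v hl2
  -- Schur–Zassenhaus inside C
  set N : Subgroup ↥C := P.subgroupOf C with hN
  haveI : N.Normal := hPn.subgroupOf C
  have hNcard : Nat.card N = p := by
    rw [← hPcard]
    exact Nat.card_congr (Subgroup.subgroupOfEquivOfLe hPC).toEquiv
  have hCdvd : Nat.card ↥C ∣ Nat.card G := Subgroup.card_subgroup_dvd_card C
  have hpNI : ¬ p ∣ N.index := by
    intro hdvd
    apply hSylow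
    have : p ^ 2 ∣ Nat.card ↥C := by
      rw [← Subgroup.card_mul_index N, hNcard, pow_two]
      exact mul_dvd_mul_left p hdvd
    exact this.trans hCdvd
  obtain ⟨K₀, hK₀⟩ := Subgroup.exists_right_complement'_of_coprime
    (N := N) (by rw [hNcard]; exact hp.coprime_iff_not_dvd.mpr hpNI)
  have hK₀card : p * Nat.card K₀ = Nat.card ↥C := by
    rw [← hNcard]; exact hK₀.card_mul
  have hpK₀ : ¬ p ∣ Nat.card K₀ := by
    intro hdvd
    apply hSylow
    refine (dvd_trans ?_ hCdvd)
    rw [← hK₀card, pow_two]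
    exact mul_dvd_mul_left p hdvd
  -- decomposition of elements of C
  have hsplit : ∀ c : ↥C, ∃ n w : ↥C, n ∈ N ∧ w ∈ K₀ ∧ c = n * w := by
    intro c
    obtain ⟨⟨n, w⟩, hnw, -⟩ := hK₀.existsUnique c
    exact ⟨n, w, n.2, w.2, hnw.symm⟩
  set K : Subgroup G := K₀.map C.subtype with hKdef
  have hKmem : ∀ x : G, x ∈ K ↔ x ∈ C ∧ ¬ p ∣ orderOf x := by
    intro x
    constructor
    · rintro ⟨y, hy, rfl⟩
      refine ⟨y.2, ?_⟩
      intro hdvd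
      apply hpK₀
      have : orderOf (C.subtype y) = orderOf y := Subgroup.orderOf_coe y
      rw [this] at hdvd
      exact hdvd.trans (Subgroup.orderOf_dvd_natCard K₀ hy)
    · rintro ⟨hxC, hxp⟩
      obtain ⟨n, w, hn, hw, hnw⟩ := hsplit ⟨x, hxC⟩
      have hcomm : Commute n w := by
        have := hxC -- w centralizes n since ↑n ∈ P and ↑w ∈ C
        have h1 : (n : G) * (w : G) = (w : G) * (n : G) := by
          have := (Subgroup.mem_centralizer_iff.mp w.2) (n : G) hn
          exact this
        exact Subtype.ext h1
      have hno : orderOf n ∣ p := by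
        rw [← Subgroup.orderOf_coe n, ← hPcard]
        exact Subgroup.orderOf_dvd_natCard P hn
      have hwo : ¬ p ∣ orderOf w := by
        intro hdvd
        exact hpK₀ (hdvd.trans (Subgroup.orderOf_dvd_natCard K₀ hw))
      have hn1 : n = 1 := by
        rcases (Nat.dvd_prime hp).mp hno with h | h
        · exact orderOf_eq_one_iff.mp h
        · exfalso
          have hco : (orderOf n).Coprime (orderOf w) := by
            rw [h]; exact hp.coprime_iff_not_dvd.mpr hwo
          have := hcomm.orderOf_mul_eq_mul_orderOf_of_coprime hco
          rw [← hnw] at this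
          apply hxp
          have hx_eq : orderOf x = orderOf ((⟨x, hxC⟩ : ↥C)) :=
            (Subgroup.orderOf_mk x hxC).symm
          rw [hx_eq, this, h]
          exact Dvd.intro _ rfl
      rw [hn1, one_mul] at hnw
      exact ⟨w, hw, by rw [← hnw]; rfl⟩
  have hKn : K.Normal := by
    constructor
    intro x hx g
    rw [hKmem] at hx ⊢
    refine ⟨hCn.conj_mem x hx.1 g, ?_⟩
    have : orderOf (g * x * g⁻¹) = orderOf x := by
      have := orderOf_injective (MulAut.conj g).toMonoidHom
        (MulAut.conj g).injective x
      simpa [MulAut.conj_apply] using this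
    rw [this]
    exact hx.2
  haveI := hKn
  -- pass to the quotient Q = G / K
  set π := QuotientGroup.mk' K with hπ
  have hπK : ∀ y : G, y ∈ K → π y = 1 := fun y hy =>
    (QuotientGroup.eq_one_iff _).mpr hy
  -- images of elements of C in the quotient have order dividing p
  have hordC : ∀ c : G, c ∈ C → orderOf (π c) ∣ p := by
    intro c hc
    obtain ⟨n, w, hn, hw, hnw⟩ := hsplit ⟨c, hc⟩
    have hc_eq : c = (n : G) * (w : G) := by
      have := congrArg (Subtype.val) hnw
      simpa using this
    have hπc : π c = π (n : G) := by
      rw [hc_eq, map_mul, hπK (w : G) ⟨w, hw, rfl⟩, mul_one]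
    rw [hπc]
    refine dvd_trans (orderOf_map_dvd π (n : G)) ?_
    rw [← hPcard]
    exact Subgroup.orderOf_dvd_natCard P hn
  have hsq : ∀ w : G, w ^ 2 ∈ C → Nat.Coprime (orderOf w) p → (π w) ^ 2 = 1 := by
    intro w hwC hcop
    have h1 : orderOf ((π w) ^ 2) ∣ p := by
      rw [← map_pow]
      exact hordC _ hwC
    have h2 : orderOf ((π w) ^ 2) ∣ orderOf w := by
      refine dvd_trans (orderOf_pow_dvd 2) (orderOf_map_dvd π w)
    have : orderOf ((π w) ^ 2) ∣ 1 := by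
      rw [← hcop]
      exact Nat.dvd_gcd h2 h1
    exact orderOf_eq_one_iff.mp (Nat.dvd_one.mp this)
  have ha2 : (π u) ^ 2 = 1 := hsq u hu2C hkp
  have hb2 : (π v) ^ 2 = 1 := hsq v hv2C hlp
  have hgenQ : Subgroup.closure {π u, π v} = ⊤ := by
    have hmap : Subgroup.map π ⊤ = ⊤ :=
      Subgroup.map_top_of_surjective π (QuotientGroup.mk'_surjective K)
    rw [← hmap, ← hgen, MonoidHom.map_closure]
    congr 1
    rw [Set.image_insert_eq, Set.image_singleton]
  -- p divides the order of the quotient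
  have hpQ : p ∣ Nat.card (G ⧸ K) := by
    have hKcard : Nat.card K = Nat.card K₀ :=
      (Nat.card_congr (Subgroup.equivMapOfInjective K₀ C.subtype
        C.subtype_injective).toEquiv).symm
    have hpG : p ∣ Nat.card G := by
      rw [← hPcard]; exact Subgroup.card_subgroup_dvd_card P
    have : Nat.card K * K.index = Nat.card G := Subgroup.card_mul_index K
    rw [← this] at hpG
    rcases (hp.dvd_mul).mp hpG with h | h
    · exact absurd (hKcard ▸ h) hpK₀
    · rwa [Subgroup.index_eq_card] at h
  -- apply the dihedral lemma
  have hdvd := dihedral_aux (π u) (π v) ha2 hb2 hgenQ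
  have hpord : p ∣ 2 * orderOf (π u * π v) := hpQ.trans hdvd
  have hpord' : p ∣ orderOf (π u * π v) := by
    rcases (hp.dvd_mul).mp hpord with h | h
    · exact absurd ((Nat.prime_dvd_prime_iff_eq hp Nat.prime_two).mp h) hp2
    · exact h
  refine hpord'.trans ?_
  rw [← map_mul]
  exact orderOf_map_dvd π (u * v)
end

section
/- Let r, s, t be positive integers, and let n be a positive integer with a prime factor p such that: p² ∤ n; the only divisor of n congruent to 1 mod p is 1; p does not divide rst; and at least two of r, s, t are coprime to (p−1)/2. Then n is not the order of any finite quotient of the triangle group Δ⁺(r,s,t) = ⟨x, y | x^r = y^s = (xy)^t = 1⟩. -/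
/-- Relations for the ordinary triangle group Δ⁺(r,s,t) = ⟨x, y | x^r = y^s = (xy)^t = 1⟩. -/
def triangleRels (r s t : ℕ) : Set (FreeGroup (Fin 2)) :=
  {(FreeGroup.of 0) ^ r, (FreeGroup.of 1) ^ s, (FreeGroup.of 0 * FreeGroup.of 1) ^ t}

/-- The ordinary triangle group Δ⁺(r,s,t). -/
def TriangleGroup (r s t : ℕ) : Type := PresentedGroup (triangleRels r s t)

instance (r s t : ℕ) : Group (TriangleGroup r s t) :=
  inferInstanceAs (Group (PresentedGroup (triangleRels r s t)))

/-- Bridge between multiplicative and additive automorphism groups. -/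
def mulAutMultiplicativeAux (A : Type*) [AddGroup A] :
    MulAut (Multiplicative A) ≃* Multiplicative (AddAut A) :=
  { AddEquiv.toMultiplicative.symm with map_mul' := fun _ _ => rfl }

lemma commute_of_isCyclic {H : Type*} [Group H] (hc : IsCyclic H) (a b : H) :
    a * b = b * a := by
  obtain ⟨g, hg⟩ := hc.exists_generator
  obtain ⟨i, rfl⟩ := hg a
  obtain ⟨j, rfl⟩ := hg b
  rw [← zpow_add, ← zpow_add, add_comm]

/-- The automorphism group of a group of prime order `p` is cyclic of order `p - 1`. -/
lemma mulAut_facts {P : Type*} [Group P] {p : ℕ} [hpf : Fact p.Prime]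
    (h : Nat.card P = p) : IsCyclic (MulAut P) ∧ Nat.card (MulAut P) = p - 1 := by
  have hp : p.Prime := Fact.out
  have hfin : Finite P := Nat.finite_of_card_ne_zero (by rw [h]; exact hp.pos.ne')
  have hc : IsCyclic P := isCyclic_of_prime_card h
  haveI : Fact (Nat.card P).Prime := ⟨h ▸ hp⟩
  haveI : NeZero (Nat.card P) := ⟨by rw [h]; exact hp.pos.ne'⟩
  let e : MulAut P ≃* (ZMod (Nat.card P))ˣ :=
    ((MulAut.congr (zmodCyclicMulEquiv hc)).symm.trans
      (mulAutMultiplicativeAux (ZMod (Nat.card P)))).trans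
        (AddEquiv.toMultiplicative (ZMod.AddAutEquivUnits (Nat.card P)))
  constructor
  · exact isCyclic_of_surjective e.symm e.symm.surjective
  · rw [Nat.card_congr e.toEquiv, Nat.card_eq_fintype_card, ZMod.card_units_eq_totient, h,
      Nat.totient_prime hp]

lemma gcd_dvd_two_aux {a p : ℕ} (hp : p.Prime) (hodd : p ≠ 2)
    (h : Nat.Coprime a ((p - 1) / 2)) : Nat.gcd a (p - 1) ∣ 2 := by
  have h2 : 2 ∣ p - 1 := (Nat.Odd.sub_odd (hp.odd_of_ne_two hodd) odd_one).two_dvd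
  calc Nat.gcd a (p - 1) = Nat.gcd a (2 * ((p - 1) / 2)) := by rw [Nat.mul_div_cancel' h2]
    _ ∣ Nat.gcd a 2 * Nat.gcd a ((p - 1) / 2) := gcd_mul_dvd_mul_gcd a 2 _
    _ = Nat.gcd a 2 := by rw [h, mul_one]
    _ ∣ 2 := Nat.gcd_dvd_right a 2

lemma gcd_two_mul_prime {a p : ℕ} (hp : p.Prime) (hpa : ¬ p ∣ a) :
    Nat.gcd a (2 * p) ∣ 2 :=
  calc Nat.gcd a (2 * p) ∣ Nat.gcd a 2 * Nat.gcd a p := gcd_mul_dvd_mul_gcd a 2 p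
    _ = Nat.gcd a 2 := by
        rw [Nat.coprime_comm.mp ((hp.coprime_iff_not_dvd).mpr hpa), mul_one]
    _ ∣ 2 := Nat.gcd_dvd_right a 2

/-- Burnside normal p-complement construction: if `P ≤ C` are subgroups of a finite group `G`
with `C` normal, `P` of order `p` with `p ^ 2 ∤ |C|`, and every element of `C` centralizes `P`,
then there is a normal subgroup `K` of `G` with `|K| * p = |C|` and `p ∤ |K|`. -/
lemma keylemma {G : Type} [Group G] [Finite G] {p : ℕ} [hpf : Fact p.Prime]
    (C P : Subgroup G) [hCn : C.Normal] (hPC : P ≤ C) (hcardP : Nat.card P = p)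
    (hp2C : ¬ p ^ 2 ∣ Nat.card C)
    (hconj : ∀ c ∈ C, ∀ g ∈ P, c * g * c⁻¹ = g) :
    ∃ K : Subgroup G, K.Normal ∧ Nat.card K * p = Nat.card C ∧ ¬ p ∣ Nat.card K := by
  have hp : p.Prime := hpf.out
  set P' : Subgroup ↥C := P.subgroupOf C with hP'def
  have hcardP' : Nat.card P' = p := by
    rw [Nat.card_congr (Subgroup.subgroupOfEquivOfLe hPC).toEquiv]; exact hcardP
  have hP'pg : IsPGroup p P' := IsPGroup.of_card (by rw [hcardP', pow_one])
  have hP'idx : ¬ p ∣ P'.index := by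
    intro h
    apply hp2C
    rw [← Subgroup.card_mul_index P', hcardP', pow_two]
    exact Nat.mul_dvd_mul_left p h
  set Psyl : Sylow p ↥C := hP'pg.toSylow hP'idx with hPsyldef
  have hPsylcoe : (Psyl : Subgroup ↥C) = P' := rfl
  have hcent : Subgroup.normalizer ((Psyl : Subgroup ↥C) : Set ↥C) ≤ Subgroup.centralizer (Psyl : Set ↥C) := by
    intro c _
    rw [Subgroup.mem_centralizer_iff]
    intro h hh
    have hh' : (h : G) ∈ P := by
      have : h ∈ P' := hh
      exact (Subgroup.mem_subgroupOf).mp this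
    have hcc := hconj (c : G) c.2 (h : G) hh'
    apply Subtype.ext
    show (h : G) * c = c * h
    conv_lhs => rw [← hcc]
    group
  set K0 : Subgroup ↥C := (MonoidHom.transferSylow Psyl hcent).ker with hK0def
  have hcompl : Subgroup.IsComplement' K0 Psyl :=
    MonoidHom.ker_transferSylow_isComplement' Psyl hcent
  have hK0p : ¬ p ∣ Nat.card K0 := MonoidHom.not_dvd_card_ker_transferSylow Psyl hcent
  have hK0card : Nat.card K0 * p = Nat.card ↥C := by
    have := hcompl.card_mul
    rwa [show Nat.card ↥(Psyl : Subgroup ↥C) = p from hcardP'] at this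
  set m : ℕ := Nat.card K0 with hmdef
  have hpowK : ∀ k : ↥C, k ∈ K0 → k ^ m = 1 := by
    intro k hk
    have h1 : (⟨k, hk⟩ : K0) ^ m = 1 := pow_card_eq_one'
    have h2 := congrArg (Subtype.val : K0 → ↥C) h1
    simpa using h2
  have hKmem : ∀ c : ↥C, c ^ m = 1 → c ∈ K0 := by
    intro c hc
    obtain ⟨⟨k, a⟩, hka⟩ := hcompl.2 c
    have hak : (a : ↥C) * (k : ↥C) = (k : ↥C) * (a : ↥C) := by
      have haP : ((a : ↥C) : G) ∈ P := (Subgroup.mem_subgroupOf).mp a.2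
      have hcc := hconj ((k : ↥C) : G) (k : ↥C).2 ((a : ↥C) : G) haP
      apply Subtype.ext
      show ((a : ↥C) : G) * (k : ↥C) = ((k : ↥C) : G) * (a : ↥C)
      conv_lhs => rw [← hcc]
      group
    have hkm : (k : ↥C) ^ m = 1 := hpowK _ k.2
    have ham : (a : ↥C) ^ m = 1 := by
      have hcm : c ^ m = (k : ↥C) ^ m * (a : ↥C) ^ m := by
        rw [← hka]; exact Commute.mul_pow hak.symm m
      rw [hc, hkm, one_mul] at hcm
      exact hcm.symm
    have ha1 : (a : ↥C) = 1 := by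
      have h1 : orderOf (a : ↥C) ∣ p := by
        have := Subgroup.orderOf_dvd_natCard P' a.2
        rwa [hcardP'] at this
      have h2 : orderOf (a : ↥C) ∣ m := orderOf_dvd_of_pow_eq_one ham
      have h3 : Nat.Coprime m p := (Nat.coprime_comm).mp (hp.coprime_iff_not_dvd.mpr hK0p)
      have h4 : orderOf (a : ↥C) ∣ 1 := by
        have := Nat.dvd_gcd h2 h1
        rwa [Nat.Coprime.gcd_eq_one h3] at this
      exact orderOf_eq_one_iff.mp (Nat.dvd_one.mp h4)
    have hka' : (k : ↥C) * (a : ↥C) = c := hka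
    rw [← hka', ha1, mul_one]
    exact k.2
  refine ⟨K0.map C.subtype, ?_, ?_, ?_⟩
  · constructor
    rintro _ ⟨k, hk, rfl⟩ g
    have hgC : g * (C.subtype k) * g⁻¹ ∈ C := hCn.conj_mem _ k.2 g
    refine ⟨⟨g * (C.subtype k) * g⁻¹, hgC⟩, hKmem _ ?_, rfl⟩
    apply Subtype.ext
    show (g * (C.subtype k) * g⁻¹) ^ m = 1
    have h1 : (g * (C.subtype k) * g⁻¹) ^ m = g * ((C.subtype k) ^ m) * g⁻¹ := by
      rw [← MulAut.conj_apply, ← map_pow, MulAut.conj_apply]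
    have h2 : ((C.subtype k) : G) ^ m = 1 := by
      have := congrArg (Subtype.val : ↥C → G) (hpowK k hk)
      simpa using this
    rw [h1, h2, mul_one, mul_inv_cancel]
  · rw [Nat.card_congr (Subgroup.equivMapOfInjective K0 C.subtype
      C.subtype_injective).toEquiv.symm]
    exact hK0card
  · rw [Nat.card_congr (Subgroup.equivMapOfInjective K0 C.subtype
      C.subtype_injective).toEquiv.symm]
    exact hK0p

theorem stmt15 (r s t : ℕ) (hr : 0 < r) (hs : 0 < s) (ht : 0 < t)
    (n p : ℕ) (hn : 0 < n) (hp : p.Prime) (hpn : p ∣ n)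
    (hp2 : ¬ p ^ 2 ∣ n) (hdiv : ∀ d : ℕ, d ∣ n → d % p = 1 % p → d = 1)
    (hprst : ¬ p ∣ r * s * t)
    (htwo : (Nat.Coprime r ((p - 1) / 2) ∧ Nat.Coprime s ((p - 1) / 2)) ∨
            (Nat.Coprime r ((p - 1) / 2) ∧ Nat.Coprime t ((p - 1) / 2)) ∨
            (Nat.Coprime s ((p - 1) / 2) ∧ Nat.Coprime t ((p - 1) / 2))) :
    ¬ ∃ (G : Type) (_ : Group G) (_ : Finite G),
        Nat.card G = n ∧ ∃ f : TriangleGroup r s t →* G, Function.Surjective f := by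
  rintro ⟨G, _, _, hcard, f, hf⟩
  haveI : Fact p.Prime := ⟨hp⟩
  -- set up generators and relations
  set g : FreeGroup (Fin 2) →* G :=
    f.comp (PresentedGroup.mk (triangleRels r s t)) with hgdef
  set x : G := g (FreeGroup.of 0) with hxdef
  set y : G := g (FreeGroup.of 1) with hydef
  have hrel : ∀ w ∈ triangleRels r s t, g w = 1 := by
    intro w hw
    have h1 : PresentedGroup.mk (triangleRels r s t) w = 1 :=
      (QuotientGroup.eq_one_iff _).mpr (Subgroup.subset_normalClosure hw)
    show f (PresentedGroup.mk (triangleRels r s t) w) = 1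
    exact (congrArg (⇑f) h1).trans (map_one f)
  have hxr : x ^ r = 1 := by
    have h := hrel _ (Set.mem_insert _ _)
    rwa [map_pow] at h
  have hys : y ^ s = 1 := by
    have h := hrel _ (Set.mem_insert_iff.mpr (Or.inr (Set.mem_insert _ _)))
    rwa [map_pow] at h
  have hxyt : (x * y) ^ t = 1 := by
    have h := hrel _ (Set.mem_insert_iff.mpr (Or.inr (Set.mem_insert_iff.mpr
      (Or.inr rfl))))
    rwa [map_pow, map_mul] at h
  have hgsurj : Function.Surjective g := hf.comp (PresentedGroup.mk_surjective _)
  have hgen : Subgroup.closure ({x, y} : Set G) = ⊤ := by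
    calc Subgroup.closure ({x, y} : Set G)
        = Subgroup.closure (⇑g '' Set.range FreeGroup.of) := by
          congr 1
          rw [← Set.range_comp]
          ext z
          simp [Fin.exists_fin_two, eq_comm]
          exact Iff.rfl
      _ = Subgroup.map g (Subgroup.closure (Set.range FreeGroup.of)) :=
          (MonoidHom.map_closure g _).symm
      _ = Subgroup.map g ⊤ := by rw [FreeGroup.closure_range_of]
      _ = ⊤ := by rw [← MonoidHom.range_eq_map, MonoidHom.range_eq_top.mpr hgsurj]
  have hpr : ¬ p ∣ r := fun h => hprst (dvd_mul_of_dvd_left (dvd_mul_of_dvd_left h s) t)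
  have hps : ¬ p ∣ s := fun h => hprst (dvd_mul_of_dvd_left (dvd_mul_of_dvd_right h r) t)
  have hpt : ¬ p ∣ t := fun h => hprst (dvd_mul_of_dvd_right h (r * s))
  -- the case p = 2 : two of the exponents are 1, so G is trivial
  by_cases hodd : p = 2
  · subst hodd
    have h0 : (2 - 1) / 2 = 0 := by norm_num
    rw [h0] at htwo
    have hG1 : x = 1 ∧ y = 1 := by
      rcases htwo with ⟨h1, h2⟩ | ⟨h1, h2⟩ | ⟨h1, h2⟩ <;>
        rw [Nat.coprime_zero_right] at h1 h2
      · exact ⟨by rw [← pow_one x, ← h1, hxr], by rw [← pow_one y, ← h2, hys]⟩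
      · have hx1 : x = 1 := by rw [← pow_one x, ← h1, hxr]
        have hxy1 : x * y = 1 := by rw [← pow_one (x * y), ← h2, hxyt]
        rw [hx1, one_mul] at hxy1
        exact ⟨hx1, hxy1⟩
      · have hy1 : y = 1 := by rw [← pow_one y, ← h1, hys]
        have hxy1 : x * y = 1 := by rw [← pow_one (x * y), ← h2, hxyt]
        rw [hy1, mul_one] at hxy1
        exact ⟨hxy1, hy1⟩
    have hbot : (⊤ : Subgroup G) ≤ ⊥ := by
      rw [← hgen, Subgroup.closure_le]
      rintro z (rfl | rfl)
      · exact hG1.1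
      · exact hG1.2
    have hGcard : Nat.card G = 1 := by
      apply Nat.card_eq_one_iff_unique.mpr
      exact ⟨⟨fun a b => by
        have ha := Subgroup.mem_bot.mp (hbot (Subgroup.mem_top a))
        have hb := Subgroup.mem_bot.mp (hbot (Subgroup.mem_top b))
        rw [ha, hb]⟩, ⟨1⟩⟩
    rw [hcard] at hGcard
    subst hGcard
    exact hp.one_lt.ne' (Nat.dvd_one.mp hpn)
  -- main case : p odd
  -- Step 1 : the Sylow p-subgroup is unique, normal, of order p
  obtain ⟨P⟩ : Nonempty (Sylow p G) := inferInstance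
  have hSylCard : Nat.card (Sylow p G) = 1 := by
    apply hdiv
    · calc Nat.card (Sylow p G) ∣ (P : Subgroup G).index := Sylow.card_dvd_index P
        _ ∣ Nat.card G := Subgroup.index_dvd_card _
        _ = n := hcard
    · exact card_sylow_modEq_one p G
  haveI hPnorm : (P : Subgroup G).Normal := by
    rw [← Subgroup.normalizer_eq_top_iff]
    apply Subgroup.index_eq_one.mp
    exact (Sylow.card_eq_index_normalizer P).symm.trans hSylCard
  have hfact1 : (Nat.card G).factorization p = 1 := by
    have hn0 : Nat.card G ≠ 0 := by rw [hcard]; omega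
    have h1 : 1 ≤ (Nat.card G).factorization p :=
      (Nat.Prime.pow_dvd_iff_le_factorization hp hn0).mp (by rwa [pow_one, hcard])
    have h2 : ¬ 2 ≤ (Nat.card G).factorization p := fun h =>
      hp2 (hcard ▸ (Nat.Prime.pow_dvd_iff_le_factorization hp hn0).mpr h)
    omega
  have hcardP : Nat.card (P : Subgroup G) = p := by
    rw [P.card_eq_multiplicity, hfact1, pow_one]
  -- Step 2 : the conjugation action on P
  set χ : G →* MulAut ↥(P : Subgroup G) := MulAut.conjNormal with hχdef
  obtain ⟨hAcyc, hAcard⟩ := mulAut_facts hcardP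
  have hAcomm := commute_of_isCyclic hAcyc
  have hord : ∀ (g₀ : G) (a : ℕ), g₀ ^ a = 1 → Nat.Coprime a ((p - 1) / 2) →
      χ g₀ ^ 2 = 1 := by
    intro g₀ a hga hcop
    have h1 : orderOf (χ g₀) ∣ a :=
      orderOf_dvd_of_pow_eq_one (by rw [← map_pow, hga, map_one])
    have h2 : orderOf (χ g₀) ∣ p - 1 := hAcard ▸ orderOf_dvd_natCard (χ g₀)
    exact orderOf_dvd_iff_pow_eq_one.mp
      ((Nat.dvd_gcd h1 h2).trans (gcd_dvd_two_aux hp hodd hcop))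
  have hXY : χ x ^ 2 = 1 ∧ χ y ^ 2 = 1 := by
    rcases htwo with ⟨h1, h2⟩ | ⟨h1, h2⟩ | ⟨h1, h2⟩
    · exact ⟨hord x r hxr h1, hord y s hys h2⟩
    · have hX := hord x r hxr h1
      have hXY2 := hord (x * y) t hxyt h2
      refine ⟨hX, ?_⟩
      have hy' : χ y = (χ x)⁻¹ * χ (x * y) := by rw [map_mul, inv_mul_cancel_left]
      rw [hy', Commute.mul_pow (hAcomm _ _), inv_pow, hX, inv_one, one_mul, hXY2]
    · have hY := hord y s hys h1
      have hXY2 := hord (x * y) t hxyt h2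
      refine ⟨?_, hY⟩
      have hx' : χ x = χ (x * y) * (χ y)⁻¹ := by rw [map_mul, mul_inv_cancel_right]
      rw [hx', Commute.mul_pow (hAcomm _ _), inv_pow, hY, inv_one, mul_one, hXY2]
  have himg : ∀ g₀ : G, χ g₀ ^ 2 = 1 := by
    let S : Subgroup G :=
      { carrier := {g₀ | χ g₀ ^ 2 = 1}
        one_mem' := by simp
        mul_mem' := fun {a b} ha hb => by
          simp only [Set.mem_setOf_eq] at *
          rw [map_mul, Commute.mul_pow (hAcomm (χ a) (χ b)), ha, hb, one_mul]
        inv_mem' := fun {a} ha => by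
          simp only [Set.mem_setOf_eq, map_inv, inv_pow] at *
          rw [ha, inv_one] }
    intro g₀
    have hle : Subgroup.closure ({x, y} : Set G) ≤ S := by
      rw [Subgroup.closure_le]
      rintro z (rfl | rfl)
      exacts [hXY.1, hXY.2]
    exact hle (hgen ▸ Subgroup.mem_top g₀)
  -- Step 3 : the kernel C of the action
  have hconj : ∀ c ∈ χ.ker, ∀ g₀ ∈ (P : Subgroup G), c * g₀ * c⁻¹ = g₀ := by
    intro c hc g₀ hg₀
    have h1 : χ c = 1 := hc
    have h2 := congrArg (fun e : MulAut ↥(P : Subgroup G) =>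
      ((e ⟨g₀, hg₀⟩ : ↥(P : Subgroup G)) : G)) h1
    simpa [hχdef, MulAut.conjNormal_apply] using h2
  have hPle : (P : Subgroup G) ≤ χ.ker := by
    intro a ha
    rw [MonoidHom.mem_ker]
    apply MulEquiv.ext
    intro b
    apply Subtype.ext
    show ((χ a) b : G) = ((1 : MulAut ↥(P : Subgroup G)) b : G)
    rw [hχdef]
    rw [MulAut.conjNormal_apply]
    have hcic : IsCyclic ↥(P : Subgroup G) := isCyclic_of_prime_card hcardP
    have h' : a * (b : G) = (b : G) * a :=
      congrArg Subtype.val (commute_of_isCyclic hcic ⟨a, ha⟩ b)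
    rw [h', mul_inv_cancel_right]
    rfl
  have hidx : χ.ker.index ∣ 2 := by
    rw [Subgroup.index_ker]
    haveI : IsCyclic χ.range := Subgroup.isCyclic _
    rw [← IsCyclic.exponent_eq_card]
    apply Monoid.exponent_dvd_of_forall_pow_eq_one
    rintro ⟨_, g₀, rfl⟩
    apply Subtype.ext
    show (χ g₀) ^ 2 = 1
    exact himg g₀
  -- Step 4 : Burnside gives a normal complement K
  have hcardC_dvd : Nat.card χ.ker ∣ n := hcard ▸ Subgroup.card_subgroup_dvd_card χ.ker
  have hp2C : ¬ p ^ 2 ∣ Nat.card χ.ker := fun h => hp2 (h.trans hcardC_dvd)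
  obtain ⟨K, hKnorm, hKC, hKp⟩ := keylemma χ.ker (P : Subgroup G) hPle hcardP hp2C hconj
  haveI := hKnorm
  -- Step 5 : the quotient G / K has order (index of C) * p, dividing 2p
  have hKpos : 0 < Nat.card K := Nat.card_pos
  have h1 : Nat.card K * K.index = n := by rw [Subgroup.card_mul_index, hcard]
  have h2 : χ.ker.index * (Nat.card K * p) = n := by
    rw [hKC, Subgroup.index_mul_card, hcard]
  have hKidx : K.index = χ.ker.index * p := by
    apply Nat.eq_of_mul_eq_mul_left hKpos
    rw [h1, ← h2]
    ring
  have hQcard : Nat.card (G ⧸ K) = χ.ker.index * p := by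
    rw [← Subgroup.index_eq_card, hKidx]
  have hQdvd : Nat.card (G ⧸ K) ∣ 2 * p := by
    rw [hQcard]
    exact mul_dvd_mul hidx dvd_rfl
  have hpQ : p ∣ Nat.card (G ⧸ K) := by
    rw [hQcard]
    exact dvd_mul_left p _
  -- Step 6 : derive a contradiction in the quotient
  set π : G →* G ⧸ K := QuotientGroup.mk' K with hπdef
  have hgenQ : ∀ q : G ⧸ K, q ∈ Subgroup.closure ({π x, π y} : Set (G ⧸ K)) := by
    intro q
    have hclos : Subgroup.closure ({π x, π y} : Set (G ⧸ K)) = ⊤ := by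
      have hsq : Function.Surjective π := QuotientGroup.mk'_surjective K
      calc Subgroup.closure {π x, π y} = Subgroup.closure (⇑π '' {x, y}) := by
            rw [Set.image_pair]
        _ = Subgroup.map π (Subgroup.closure {x, y}) := (MonoidHom.map_closure _ _).symm
        _ = Subgroup.map π ⊤ := by rw [hgen]
        _ = ⊤ := by rw [← MonoidHom.range_eq_map, MonoidHom.range_eq_top.mpr hsq]
    rw [hclos]
    trivial
  have hsq : ∀ (g₀ : G) (a : ℕ), g₀ ^ a = 1 → ¬ p ∣ a → (π g₀) ^ 2 = 1 := by
    intro g₀ a hga hpa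
    have h1 : orderOf (π g₀) ∣ a :=
      orderOf_dvd_of_pow_eq_one (by rw [← map_pow, hga, map_one])
    have h2 : orderOf (π g₀) ∣ 2 * p := (orderOf_dvd_natCard _).trans hQdvd
    exact orderOf_dvd_iff_pow_eq_one.mp
      ((Nat.dvd_gcd h1 h2).trans (gcd_two_mul_prime hp hpa))
  have hX2 : (π x) ^ 2 = 1 := hsq x r hxr hpr
  have hY2 : (π y) ^ 2 = 1 := hsq y s hys hps
  have hXY2 : (π x * π y) ^ 2 = 1 := by
    rw [← map_mul]; exact hsq (x * y) t hxyt hpt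
  have hxinv : (π x)⁻¹ = π x := inv_eq_of_mul_eq_one_right (by rw [← pow_two]; exact hX2)
  have hyinv : (π y)⁻¹ = π y := inv_eq_of_mul_eq_one_right (by rw [← pow_two]; exact hY2)
  have hcomm : π x * π y = π y * π x := by
    calc π x * π y = (π x * π y)⁻¹ :=
          (inv_eq_of_mul_eq_one_right (by rw [← pow_two]; exact hXY2)).symm
      _ = (π y)⁻¹ * (π x)⁻¹ := mul_inv_rev _ _
      _ = π y * π x := by rw [hxinv, hyinv]
  have hcenter : ∀ q : G ⧸ K, q ∈ Subgroup.center (G ⧸ K) := by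
    have hcentral : ∀ z : G ⧸ K, (z = π x ∨ z = π y) → z ∈ Subgroup.center (G ⧸ K) := by
      intro z hz
      rw [Subgroup.mem_center_iff]
      intro q
      have hle : Subgroup.closure ({π x, π y} : Set (G ⧸ K)) ≤ Subgroup.centralizer {z} := by
        rw [Subgroup.closure_le]
        rintro w (rfl | rfl) <;>
          rw [SetLike.mem_coe, Subgroup.mem_centralizer_singleton_iff] <;>
          rcases hz with rfl | rfl
        · rfl
        · exact hcomm
        · exact hcomm.symm
        · rfl
      exact Subgroup.mem_centralizer_singleton_iff.mp (hle (hgenQ q))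
    intro q
    have hle : Subgroup.closure ({π x, π y} : Set (G ⧸ K)) ≤ Subgroup.center (G ⧸ K) := by
      rw [Subgroup.closure_le]
      rintro w (rfl | rfl)
      · exact hcentral _ (Or.inl rfl)
      · exact hcentral _ (Or.inr rfl)
    exact hle (hgenQ q)
  have hallsq : ∀ q : G ⧸ K, q ^ 2 = 1 := by
    let S : Subgroup (G ⧸ K) :=
      { carrier := {q | q ^ 2 = 1}
        one_mem' := by simp
        mul_mem' := fun {a b} ha hb => by
          simp only [Set.mem_setOf_eq] at *
          have hab : Commute a b := (Subgroup.mem_center_iff.mp (hcenter a) b).symm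
          rw [hab.mul_pow, ha, hb, one_mul]
        inv_mem' := fun {a} ha => by
          simp only [Set.mem_setOf_eq, inv_pow] at *
          rw [ha, inv_one] }
    intro q
    have hle : Subgroup.closure ({π x, π y} : Set (G ⧸ K)) ≤ S := by
      rw [Subgroup.closure_le]
      rintro w (rfl | rfl)
      exacts [hX2, hY2]
    exact hle (hgenQ q)
  obtain ⟨q, hq⟩ := exists_prime_orderOf_dvd_card' p hpQ
  have h2 : orderOf q ∣ 2 := orderOf_dvd_of_pow_eq_one (hallsq q)
  rw [hq] at h2
  exact hodd ((Nat.prime_dvd_prime_iff_eq hp Nat.prime_two).mp h2)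
end
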